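/- arXiv:2110.09838 — 5 statements merged into one kernel-verified Lean document; each statement's English description precedes it below -/
import Mathlib

section
/- There exists a continuous function θ on X₃ = {(y,z,z') : z,z' ∈ X⁺ with z₀ = z'₀, y ∈ X⁻_z} such that for all such z, z' and every continuous function φ on X⁻_z, ∫ φ(y) ν⁻_{z'}(dy) = ∫ φ(y) e^{θ(y,z,z')} ν⁻_z(dy); moreover there is a constant c > 0 with |θ(y,z,z')| ≤ c α^{ω(z,z')}. In fact one can take θ(y,z,z') = Σ_{k=1}^∞ (ψ(T^{-k}(y·z)) − ψ(T^{-k}(y·z'))). -/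
open MeasureTheory

variable {A : Type*}

/-- The one-sided subshift of finite type. -/
def XplusSet (M : A → A → Bool) : Set (ℕ → A) := {z | ∀ n : ℕ, M (z n) (z (n + 1)) = true}

/-- The one-sided shift map. -/
def shiftN : (ℕ → A) → ℕ → A := fun z n => z (n + 1)

/-- The inverse of the two-sided shift map. -/
def shiftZinv : (ℤ → A) → ℤ → A := fun x n => x (n - 1)

/-- One-sided Birkhoff sums. -/
noncomputable def birkhoffN (ψ : (ℕ → A) → ℝ) (n : ℕ) (z : ℕ → A) : ℝ :=
  ∑ k ∈ Finset.range n, ψ (shiftN^[k] z)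

/-- The projection of a two-sided sequence on its future coordinates. -/
def futurePart (x : ℤ → A) : ℕ → A := fun n => x n

/-- The concatenation `y·z ∈ A^ℤ` of a past `y` (with `y k = x_{-(k+1)}`) and a future `z`. -/
def concat (y z : ℕ → A) : ℤ → A :=
  fun n => if 0 ≤ n then z n.toNat else y (-(n + 1)).toNat

/-- `y ∈ X⁻_z` : the past `y` is compatible with the future `z`. -/
def pastCompat (M : A → A → Bool) (y z : ℕ → A) : Prop :=
  M (y 0) (z 0) = true ∧ ∀ k : ℕ, M (y (k + 1)) (y k) = true

/-- One-sided Hölder continuity with constant `C` and exponent `α` on `S`. -/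
def HolderWithN (S : Set (ℕ → A)) (C α : ℝ) (f : (ℕ → A) → ℝ) : Prop :=
  ∀ z ∈ S, ∀ z' ∈ S, ∀ k : ℕ, (∀ j : ℕ, j < k → z j = z' j) → |f z - f z'| ≤ C * α ^ k

/-- The one-sided word `a·z` obtained by prepending the word `a = (y_{-k},...,y_{-1})`
(encoded with `a i = x_{-(i+1)}`) to the future `z`. -/
def wordConcat {k : ℕ} (a : Fin k → A) (z : ℕ → A) : ℕ → A :=
  fun n => if h : n < k then a ⟨k - 1 - n, by omega⟩ else z (n - k)

/-- Compatibility of the word `a` with the future `z`. -/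
def wordCompat (M : A → A → Bool) {k : ℕ} (a : Fin k → A) (z : ℕ → A) : Prop :=
  (∀ h : 0 < k, M (a ⟨0, h⟩) (z 0) = true) ∧
    ∀ i : ℕ, ∀ h : i + 1 < k, M (a ⟨i + 1, h⟩) (a ⟨i, by omega⟩) = true

/-- The cylinder `{y : y_{-k} = a_{-k}, ..., y_{-1} = a_{-1}}` in the space of pasts. -/
def pastCyl {k : ℕ} (a : Fin k → A) : Set (ℕ → A) := {y | ∀ i : Fin k, y i = a i}

/-- The family `z ↦ ν⁻_z` of conditional measures on the pasts, determined on cylinders by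
`ν⁻_z(C_{a,z}) = exp(-S_k ψ(a·z))` for compatible words `a`, and `0` otherwise. -/
def IsCondGibbs [MeasurableSpace A] (M : A → A → Bool) (ψ : (ℕ → A) → ℝ)
    (νm : (ℕ → A) → Measure (ℕ → A)) : Prop :=
  ∀ z ∈ XplusSet M, ∀ (k : ℕ) (a : Fin k → A),
    (wordCompat M a z →
      νm z (pastCyl a) = ENNReal.ofReal (Real.exp (-birkhoffN ψ k (wordConcat a z)))) ∧
    (¬ wordCompat M a z → νm z (pastCyl a) = 0)

/-- `a ↦ a·z` : prepending a letter to a one-sided sequence. -/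
def consN (a : A) (z : ℕ → A) : ℕ → A := fun n => if n = 0 then a else z (n - 1)

/-- The Ruelle transfer operator `L_ψ φ(z) = ∑_{Ty=z} e^{-ψ(y)} φ(y)`. -/
noncomputable def transfer [Fintype A] [DecidableEq A] (M : A → A → Bool)
    (ψ φ : (ℕ → A) → ℝ) (z : ℕ → A) : ℝ :=
  ∑ a ∈ Finset.univ.filter (fun a => M a (z 0) = true),
    Real.exp (-ψ (consN a z)) * φ (consN a z)

namespace St5
open Finset

variable {A : Type*}

def restr (y : ℕ → A) (k : ℕ) : Fin k → A := fun i => y i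

lemma shiftZinv_iterate (x : ℤ → A) (j : ℕ) : shiftZinv^[j] x = fun n => x (n - j) := by
  induction j with
  | zero => simp
  | succ j ih =>
    rw [Function.iterate_succ_apply', ih]
    funext n
    simp only [shiftZinv]
    congr 1
    push_cast
    ring

lemma futurePart_eq (y z : ℕ → A) (k : ℕ) :
    futurePart (shiftZinv^[k + 1] (concat y z)) = wordConcat (restr y (k + 1)) z := by
  funext n
  rw [shiftZinv_iterate]
  simp only [futurePart, concat, wordConcat, restr]
  by_cases h : n < k + 1
  · rw [dif_pos h, if_neg (by push_cast; omega)]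
    congr 1
    omega
  · rw [dif_neg h, if_pos (by push_cast; omega)]
    congr 1
    omega

lemma wordConcat_lt {k : ℕ} (a : Fin k → A) (z : ℕ → A) {n : ℕ} (h : n < k) :
    wordConcat a z n = a ⟨k - 1 - n, by omega⟩ := dif_pos h

lemma wordConcat_ge {k : ℕ} (a : Fin k → A) (z : ℕ → A) {n : ℕ} (h : ¬ n < k) :
    wordConcat a z n = z (n - k) := dif_neg h

lemma wordConcat_mem (M : A → A → Bool) {k : ℕ} {a : Fin k → A} {z : ℕ → A}
    (hz : z ∈ XplusSet M) (ha : wordCompat M a z) : wordConcat a z ∈ XplusSet M := by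
  intro n
  obtain ⟨h0, hchain⟩ := ha
  by_cases h1 : n + 1 < k
  · rw [wordConcat_lt a z (by omega), wordConcat_lt a z h1]
    have h := hchain (k - 1 - (n + 1)) (by omega)
    have e1 : (⟨k - 1 - n, by omega⟩ : Fin k) = ⟨k - 1 - (n + 1) + 1, by omega⟩ := by
      apply Fin.ext; simp; omega
    have e2 : (⟨k - 1 - (n + 1), by omega⟩ : Fin k) = ⟨k - 1 - (n + 1), by omega⟩ := rfl
    rw [e1]
    exact h
  · by_cases h2 : n < k
    · rw [wordConcat_lt a z h2, wordConcat_ge a z h1]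
      have hk : 0 < k := by omega
      have e1 : (⟨k - 1 - n, by omega⟩ : Fin k) = ⟨0, hk⟩ := by apply Fin.ext; simp; omega
      have e2 : n + 1 - k = 0 := by omega
      rw [e1, e2]
      exact h0 hk
    · rw [wordConcat_ge a z h2, wordConcat_ge a z (by omega)]
      have h := hz (n - k)
      have e : n + 1 - k = n - k + 1 := by omega
      rw [e]
      exact h

lemma pastCompat_wordCompat (M : A → A → Bool) {y z : ℕ → A} (h : pastCompat M y z) (k : ℕ) :
    wordCompat M (restr y k) z :=
  ⟨fun _ => h.1, fun i _ => h.2 i⟩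

lemma wordCompat_congr (M : A → A → Bool) {k : ℕ} (a : Fin k → A) {z z' : ℕ → A}
    (h : z 0 = z' 0) (ha : wordCompat M a z) : wordCompat M a z' :=
  ⟨fun hk => h ▸ ha.1 hk, ha.2⟩

lemma wordCompat_prefix (M : A → A → Bool) {n : ℕ} {b : Fin n → A} {z : ℕ → A}
    (h : wordCompat M b z) (k : ℕ) (hk : k ≤ n) :
    wordCompat M (fun i : Fin k => b ⟨i.1, lt_of_lt_of_le i.2 hk⟩) z :=
  ⟨fun h0 => h.1 (by omega), fun i hi => h.2 i (by omega)⟩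

lemma wordConcat_agree {k : ℕ} (a : Fin k → A) {z z' : ℕ → A} {m : ℕ}
    (h : ∀ j, j < m → z j = z' j) :
    ∀ j, j < k + m → wordConcat a z j = wordConcat a z' j := by
  intro j hj
  by_cases hjk : j < k
  · rw [wordConcat_lt a z hjk, wordConcat_lt a z' hjk]
  · rw [wordConcat_ge a z hjk, wordConcat_ge a z' hjk, h _ (by omega)]

lemma shiftN_iterate (w : ℕ → A) (j : ℕ) : shiftN^[j] w = fun n => w (n + j) := by
  induction j with
  | zero => simp
  | succ j ih =>
    rw [Function.iterate_succ_apply', ih]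
    funext n
    simp only [shiftN]
    congr 1
    omega

lemma shift_wordConcat {k : ℕ} (a : Fin k → A) (z : ℕ → A) {j : ℕ} (hj : j ≤ k) :
    shiftN^[j] (wordConcat a z) = wordConcat (fun i : Fin (k - j) => a ⟨i.1, by omega⟩) z := by
  rw [shiftN_iterate]
  funext n
  by_cases h : n < k - j
  · rw [wordConcat_lt _ z h, wordConcat_lt a z (by omega)]
    congr 1
    apply Fin.ext
    simp
    omega
  · rw [wordConcat_ge _ z h, wordConcat_ge a z (by omega)]
    congr 1
    omega

lemma wordConcat_congr' {k k' : ℕ} (hkk : k = k') (a : Fin k → A) (a' : Fin k' → A)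
    (ha : ∀ i : ℕ, (h : i < k) → (h' : i < k') → a ⟨i, h⟩ = a' ⟨i, h'⟩) (z : ℕ → A) :
    wordConcat a z = wordConcat a' z := by
  subst hkk
  have : a = a' := funext fun i => ha i.1 i.2 i.2
  rw [this]

lemma restr_restr (y : ℕ → A) {k n : ℕ} (hk : k ≤ n) :
    (fun i : Fin k => (restr y n) ⟨i.1, lt_of_lt_of_le i.2 hk⟩) = restr y k := rfl

lemma birkhoff_eq_sum (ψ : (ℕ → A) → ℝ) (y z : ℕ → A) (n : ℕ) :
    birkhoffN ψ n (wordConcat (restr y n) z) =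
      ∑ k ∈ Finset.range n, ψ (wordConcat (restr y (k + 1)) z) := by
  rw [← Finset.sum_range_reflect (fun k => ψ (wordConcat (restr y (k + 1)) z)) n]
  unfold birkhoffN
  apply Finset.sum_congr rfl
  intro k hk
  have hk' : k < n := Finset.mem_range.mp hk
  rw [shift_wordConcat (restr y n) z (le_of_lt hk')]
  congr 1
  exact wordConcat_congr' (k := n - k) (k' := n - 1 - k + 1) (by omega)
    (fun i : Fin (n - k) => restr y n ⟨i.1, by omega⟩) (restr y (n - 1 - k + 1))
    (fun i h h' => rfl) z

end St5

namespace St5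
open Finset Real

variable {A : Type*}

noncomputable def raw (ψ : (ℕ → A) → ℝ) (k : ℕ) (y z z' : ℕ → A) : ℝ :=
  ψ (wordConcat (restr y (k + 1)) z) - ψ (wordConcat (restr y (k + 1)) z')

noncomputable def term (ψ : (ℕ → A) → ℝ) (C α : ℝ) (k : ℕ) (y z z' : ℕ → A) : ℝ :=
  max (-(C * α ^ (k + 1))) (min (C * α ^ (k + 1)) (raw ψ k y z z'))

noncomputable def theta (ψ : (ℕ → A) → ℝ) (C α : ℝ) (y z z' : ℕ → A) : ℝ :=
  ∑' k : ℕ, term ψ C α k y z z'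

variable {M : A → A → Bool} {ψ : (ℕ → A) → ℝ} {C α : ℝ}

lemma abs_term_le (hC : 0 < C) (hα0 : 0 < α) (k : ℕ) (y z z' : ℕ → A) :
    |term ψ C α k y z z'| ≤ C * α ^ (k + 1) := by
  have hB : 0 ≤ C * α ^ (k + 1) := by positivity
  rw [abs_le]
  constructor
  · exact le_max_left _ _
  · exact max_le (by linarith) (min_le_left _ _)

lemma term_eq_raw (k : ℕ) (y z z' : ℕ → A) (h : |raw ψ k y z z'| ≤ C * α ^ (k + 1)) :
    term ψ C α k y z z' = raw ψ k y z z' := by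
  rw [abs_le] at h
  unfold term
  rw [min_eq_right h.2, max_eq_right h.1]

/-- pastCompat transfers along equal first coordinate. -/
lemma pastCompat_congr {y z z' : ℕ → A} (h0 : z 0 = z' 0) (h : pastCompat M y z) :
    pastCompat M y z' := ⟨h0 ▸ h.1, h.2⟩

lemma abs_raw_le (hψ : HolderWithN (XplusSet M) C α ψ)
    {z z' : ℕ → A} (hz : z ∈ XplusSet M) (hz' : z' ∈ XplusSet M) (h0 : z 0 = z' 0)
    {y : ℕ → A} (hy : pastCompat M y z) {m : ℕ} (hm : ∀ j, j < m → z j = z' j) (k : ℕ) :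
    |raw ψ k y z z'| ≤ C * α ^ (k + 1 + m) := by
  have hw : wordConcat (restr y (k + 1)) z ∈ XplusSet M :=
    wordConcat_mem M hz (pastCompat_wordCompat M hy (k + 1))
  have hw' : wordConcat (restr y (k + 1)) z' ∈ XplusSet M :=
    wordConcat_mem M hz' (pastCompat_wordCompat M (pastCompat_congr h0 hy) (k + 1))
  exact hψ _ hw _ hw' (k + 1 + m) (wordConcat_agree _ hm)

lemma summable_geom (hC : 0 < C) (hα0 : 0 < α) (hα1 : α < 1) (m : ℕ) :
    Summable (fun k : ℕ => C * α ^ (k + 1 + m)) := by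
  have h := (summable_geometric_of_lt_one hα0.le hα1).mul_left (C * α ^ (1 + m))
  exact h.congr (fun k => by rw [show k + 1 + m = k + (1 + m) by ring, pow_add]; ring)

lemma tsum_geom (hC : 0 < C) (hα0 : 0 < α) (hα1 : α < 1) (m : ℕ) :
    ∑' k : ℕ, C * α ^ (k + 1 + m) = (C * α / (1 - α)) * α ^ m := by
  have h1 : ∀ k : ℕ, C * α ^ (k + 1 + m) = (C * α ^ (1 + m)) * α ^ k := by
    intro k
    rw [show k + 1 + m = 1 + m + k by ring, pow_add]
    ring
  rw [tsum_congr h1, tsum_mul_left, tsum_geometric_of_lt_one hα0.le hα1, pow_add]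
  field_simp

lemma summable_term (hC : 0 < C) (hα0 : 0 < α) (hα1 : α < 1) (y z z' : ℕ → A) :
    Summable (fun k => term ψ C α k y z z') := by
  apply Summable.of_norm
  apply Summable.of_nonneg_of_le (fun k => norm_nonneg _)
    (fun k => (abs_term_le hC hα0 k y z z'))
  simpa using summable_geom hC hα0 hα1 0

/-- The bound (3): on agreement of length m. -/
lemma abs_theta_le (hC : 0 < C) (hα0 : 0 < α) (hα1 : α < 1)
    (hψ : HolderWithN (XplusSet M) C α ψ)
    {z z' : ℕ → A} (hz : z ∈ XplusSet M) (hz' : z' ∈ XplusSet M) (h0 : z 0 = z' 0)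
    {y : ℕ → A} (hy : pastCompat M y z) {m : ℕ} (hm : ∀ j, j < m → z j = z' j) :
    |theta ψ C α y z z'| ≤ (C * α / (1 - α)) * α ^ m := by
  have hbd : ∀ k, |term ψ C α k y z z'| ≤ C * α ^ (k + 1 + m) := by
    intro k
    have hr := abs_raw_le hψ hz hz' h0 hy hm k
    have hmono : C * α ^ (k + 1 + m) ≤ C * α ^ (k + 1) := by
      apply mul_le_mul_of_nonneg_left _ hC.le
      exact pow_le_pow_of_le_one hα0.le hα1.le (by omega)
    rw [term_eq_raw k y z z' (hr.trans hmono)]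
    exact hr
  calc |theta ψ C α y z z'| ≤ ∑' k, |term ψ C α k y z z'| := by
        simpa only [theta, Real.norm_eq_abs] using
          norm_tsum_le_tsum_norm (f := fun k => term ψ C α k y z z')
            (by simpa only [Real.norm_eq_abs] using (summable_term hC hα0 hα1 y z z').abs)
      _ ≤ ∑' k, C * α ^ (k + 1 + m) := by
        apply Summable.tsum_le_tsum hbd (summable_term hC hα0 hα1 y z z').abs
          (summable_geom hC hα0 hα1 m)
      _ = (C * α / (1 - α)) * α ^ m := tsum_geom hC hα0 hα1 m

/-- Partial sums of theta. -/
noncomputable def thetaPart (ψ : (ℕ → A) → ℝ) (C α : ℝ) (n : ℕ) (y z z' : ℕ → A) : ℝ :=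
  ∑ k ∈ Finset.range n, term ψ C α k y z z'

lemma theta_tail (hC : 0 < C) (hα0 : 0 < α) (hα1 : α < 1) (n : ℕ) (y z z' : ℕ → A) :
    |theta ψ C α y z z' - thetaPart ψ C α n y z z'| ≤ (C * α / (1 - α)) * α ^ n := by
  have hs := summable_term (ψ := ψ) hC hα0 hα1 y z z'
  have hsplit := Summable.sum_add_tsum_nat_add n hs
  have : theta ψ C α y z z' - thetaPart ψ C α n y z z' = ∑' k, term ψ C α (k + n) y z z' := by
    unfold theta thetaPart
    rw [← hsplit]
    ring
  rw [this]
  calc |∑' k, term ψ C α (k + n) y z z'| ≤ ∑' k, |term ψ C α (k + n) y z z'| := by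
        simpa only [Real.norm_eq_abs] using
          norm_tsum_le_tsum_norm (f := fun k => term ψ C α (k + n) y z z')
            (by simpa only [Real.norm_eq_abs, Function.comp_def] using (hs.comp_injective (add_left_injective n)).abs)
    _ ≤ ∑' k, C * α ^ (k + 1 + n) := by
        apply Summable.tsum_le_tsum _ ((hs.comp_injective (add_left_injective n)).abs)
          (summable_geom hC hα0 hα1 n)
        intro k
        have := abs_term_le (ψ := ψ) hC hα0 (k + n) y z z'
        calc |term ψ C α (k + n) y z z'| ≤ C * α ^ (k + n + 1) := this
          _ = C * α ^ (k + 1 + n) := by ring_nf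
    _ = (C * α / (1 - α)) * α ^ n := tsum_geom hC hα0 hα1 n

lemma term_congr (k : ℕ) {y y' : ℕ → A} (h : ∀ i, i ≤ k → y i = y' i) (z z' : ℕ → A) :
    term ψ C α k y z z' = term ψ C α k y' z z' := by
  have : restr y (k + 1) = restr y' (k + 1) := funext fun i => h i.1 (by omega)
  unfold term raw
  rw [this]

end St5

namespace St5
open Finset Real Filter Topology

variable {A : Type*} [TopologicalSpace A] [DiscreteTopology A]
variable {M : A → A → Bool} {ψ : (ℕ → A) → ℝ} {C α : ℝ}

lemma continuousOn_of_holder (hC : 0 < C) (hα0 : 0 < α) (hα1 : α < 1)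
    {S : Set (ℕ → A)} (hψ : HolderWithN S C α ψ) : ContinuousOn ψ S := by
  intro z hz
  rw [ContinuousWithinAt, Metric.tendsto_nhds]
  intro ε hε
  obtain ⟨m, hm⟩ : ∃ m : ℕ, C * α ^ m < ε := by
    have h := Tendsto.mul_const (b := C) (tendsto_pow_atTop_nhds_zero_of_lt_one hα0.le hα1)
    rw [zero_mul] at h
    have := (h.eventually (eventually_lt_nhds hε)).exists
    obtain ⟨m, hm⟩ := this
    exact ⟨m, by rw [mul_comm]; exact hm⟩
  have hV : {x : ℕ → A | ∀ j, j < m → x j = z j} ∈ 𝓝[S] z := by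
    apply mem_nhdsWithin_of_mem_nhds
    have : {x : ℕ → A | ∀ j, j < m → x j = z j} = ⋂ j ∈ Finset.range m,
        (fun x : ℕ → A => x j) ⁻¹' {z j} := by
      ext x; simp [Set.mem_iInter]
    rw [this]
    apply (Filter.biInter_finset_mem (Finset.range m)).mpr
    intro j _
    exact (continuous_apply j).continuousAt.preimage_mem_nhds
      ((isOpen_discrete {z j}).mem_nhds rfl)
  filter_upwards [hV, self_mem_nhdsWithin] with x hx hxS
  rw [Real.dist_eq]
  calc |ψ x - ψ z| ≤ C * α ^ m := hψ x hxS z hz m hx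
    _ < ε := hm

lemma continuous_restr (k : ℕ) : Continuous (fun y : ℕ → A => restr y k) :=
  continuous_pi fun i => continuous_apply _

lemma continuous_term_y [Fintype A] (k : ℕ) (z z' : ℕ → A) :
    Continuous (fun y => term ψ C α k y z z') := by
  have h : Continuous (fun v : Fin (k + 1) → A =>
      max (-(C * α ^ (k + 1))) (min (C * α ^ (k + 1))
        (ψ (wordConcat v z) - ψ (wordConcat v z')))) := continuous_of_discreteTopology
  exact h.comp (continuous_restr (k + 1))

lemma continuous_theta_y [Fintype A] (hC : 0 < C) (hα0 : 0 < α) (hα1 : α < 1) (z z' : ℕ → A) :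
    Continuous (fun y => theta ψ C α y z z') := by
  apply continuous_tsum (fun k => continuous_term_y k z z')
    (by simpa using summable_geom (C := C) (α := α) hC hα0 hα1 0)
  intro k y
  simpa only [Real.norm_eq_abs] using abs_term_le (ψ := ψ) hC hα0 k y z z'

/-- The good set for joint continuity. -/
def goodSet (M : A → A → Bool) : Set ((ℕ → A) × (ℕ → A) × (ℕ → A)) :=
  {p | p.2.1 ∈ XplusSet M ∧ p.2.2 ∈ XplusSet M ∧ p.2.1 0 = p.2.2 0 ∧ pastCompat M p.1 p.2.1}

lemma continuousOn_theta (hC : 0 < C) (hα0 : 0 < α) (hα1 : α < 1)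
    (hψ : HolderWithN (XplusSet M) C α ψ) :
    ContinuousOn (fun p : (ℕ → A) × (ℕ → A) × (ℕ → A) => theta ψ C α p.1 p.2.1 p.2.2)
      (goodSet M) := by
  have hψc : ContinuousOn ψ (XplusSet M) := continuousOn_of_holder hC hα0 hα1 hψ
  apply continuousOn_tsum (u := fun k => C * α ^ (k + 1))
  · intro k
    have hF1 : Continuous (fun p : (ℕ → A) × (ℕ → A) × (ℕ → A) =>
        wordConcat (restr p.1 (k + 1)) p.2.1) := by
      apply continuous_pi
      intro n
      unfold wordConcat
      by_cases h : n < k + 1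
      · simp only [dif_pos h]
        exact (continuous_apply _).comp continuous_fst
      · simp only [dif_neg h]
        exact (continuous_apply _).comp (continuous_fst.comp continuous_snd)
    have hF2 : Continuous (fun p : (ℕ → A) × (ℕ → A) × (ℕ → A) =>
        wordConcat (restr p.1 (k + 1)) p.2.2) := by
      apply continuous_pi
      intro n
      unfold wordConcat
      by_cases h : n < k + 1
      · simp only [dif_pos h]
        exact (continuous_apply _).comp continuous_fst
      · simp only [dif_neg h]
        exact (continuous_apply _).comp (continuous_snd.comp continuous_snd)
    have hm1 : Set.MapsTo (fun p : (ℕ → A) × (ℕ → A) × (ℕ → A) =>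
        wordConcat (restr p.1 (k + 1)) p.2.1) (goodSet M) (XplusSet M) := by
      rintro p ⟨h1, h2, h3, h4⟩
      exact wordConcat_mem M h1 (pastCompat_wordCompat M h4 (k + 1))
    have hm2 : Set.MapsTo (fun p : (ℕ → A) × (ℕ → A) × (ℕ → A) =>
        wordConcat (restr p.1 (k + 1)) p.2.2) (goodSet M) (XplusSet M) := by
      rintro p ⟨h1, h2, h3, h4⟩
      exact wordConcat_mem M h2 (pastCompat_wordCompat M (pastCompat_congr h3 h4) (k + 1))
    have hc1 := hψc.comp hF1.continuousOn hm1
    have hc2 := hψc.comp hF2.continuousOn hm2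
    have hclamp : Continuous (fun t : ℝ => max (-(C * α ^ (k + 1))) (min (C * α ^ (k + 1)) t)) :=
      continuous_const.max (continuous_const.min continuous_id)
    exact hclamp.comp_continuousOn (hc1.sub hc2)
  · simpa using summable_geom (C := C) (α := α) hC hα0 hα1 0
  · intro k p _
    simpa only [Real.norm_eq_abs] using abs_term_le (ψ := ψ) hC hα0 k p.1 p.2.1 p.2.2

end St5

namespace St5
open Finset MeasureTheory

variable {A : Type*}

section Meas
variable [MeasurableSpace A] [MeasurableSingletonClass A]

lemma measurableSet_pastCyl {k : ℕ} (a : Fin k → A) : MeasurableSet (pastCyl a) := by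
  have : pastCyl a = ⋂ i : Fin k, (fun y : ℕ → A => y i) ⁻¹' {a i} := by
    ext y; simp [pastCyl]
  rw [this]
  exact MeasurableSet.iInter fun i => (measurable_pi_apply _) (measurableSet_singleton _)

lemma pastCyl_empty (a : Fin 0 → A) : pastCyl a = Set.univ := by
  ext y; simp [pastCyl]

def cylSets (A : Type*) : Set (Set (ℕ → A)) := {s | ∃ (k : ℕ) (a : Fin k → A), s = pastCyl a}

lemma cyl_subset {k l : ℕ} (hkl : k ≤ l) (a : Fin k → A) (b : Fin l → A) {y : ℕ → A}
    (hy : y ∈ pastCyl a ∩ pastCyl b) : pastCyl b ⊆ pastCyl a := by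
  intro w hw i
  have h1 : y i.1 = a i := hy.1 i
  have h2 : y i.1 = b ⟨i.1, lt_of_lt_of_le i.2 hkl⟩ := hy.2 ⟨i.1, lt_of_lt_of_le i.2 hkl⟩
  have h3 : w i.1 = b ⟨i.1, lt_of_lt_of_le i.2 hkl⟩ := hw ⟨i.1, lt_of_lt_of_le i.2 hkl⟩
  rw [h3, ← h2, h1]

lemma isPiSystem_cylSets : IsPiSystem (cylSets A) := by
  rintro s ⟨k, a, rfl⟩ t ⟨l, b, rfl⟩ hne
  obtain ⟨y, hy⟩ := hne
  rcases le_total k l with h | h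
  · have := cyl_subset h a b hy
    rw [Set.inter_eq_right.mpr this]
    exact ⟨l, b, rfl⟩
  · have := cyl_subset h b a ⟨hy.2, hy.1⟩
    rw [Set.inter_eq_left.mpr this]
    exact ⟨k, a, rfl⟩

lemma singleton_preimage_mem [Fintype A] (i : ℕ) (c : A) :
    MeasurableSet[MeasurableSpace.generateFrom (cylSets A)]
      ((fun y : ℕ → A => y i) ⁻¹' {c}) := by
  have : ((fun y : ℕ → A => y i) ⁻¹' {c}) =
      ⋃ b ∈ {b : Fin (i + 1) → A | b ⟨i, Nat.lt_succ_self i⟩ = c}, pastCyl b := by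
    ext y
    simp only [Set.mem_preimage, Set.mem_singleton_iff, Set.mem_iUnion, Set.mem_setOf_eq]
    constructor
    · intro h
      exact ⟨restr y (i + 1), h, fun j => rfl⟩
    · rintro ⟨b, hb, hy⟩
      rw [hy ⟨i, Nat.lt_succ_self i⟩, hb]
  rw [this]
  apply MeasurableSet.biUnion (Set.to_countable _)
  intro b _
  exact MeasurableSpace.measurableSet_generateFrom ⟨i + 1, b, rfl⟩

lemma generateFrom_cylSets [Fintype A] :
    (MeasurableSpace.pi : MeasurableSpace (ℕ → A)) =
      MeasurableSpace.generateFrom (cylSets A) := by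
  apply le_antisymm
  · apply iSup_le
    intro i
    rintro s ⟨t, ht, rfl⟩
    have : (fun y : ℕ → A => y i) ⁻¹' t = ⋃ c ∈ t, (fun y : ℕ → A => y i) ⁻¹' {c} := by
      ext y; simp
    rw [this]
    exact MeasurableSet.biUnion (Set.to_countable _) fun c _ => singleton_preimage_mem i c
  · apply MeasurableSpace.generateFrom_le
    rintro s ⟨k, a, rfl⟩
    exact measurableSet_pastCyl a

/-- Decomposition of a cylinder into finer cylinders. -/
lemma measure_cyl_sum (m : Measure (ℕ → A)) [Fintype A] [DecidableEq A] {k n : ℕ} (hkn : k ≤ n)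
    (a : Fin k → A) :
    m (pastCyl a) = ∑ b ∈ Finset.univ.filter
      (fun b : Fin n → A => ∀ i : Fin k, b ⟨i.1, lt_of_lt_of_le i.2 hkn⟩ = a i),
      m (pastCyl b) := by
  rw [← measure_biUnion_finset]
  · congr 1
    ext y
    simp only [Set.mem_iUnion, Finset.mem_filter, Finset.mem_univ, true_and, pastCyl,
      Set.mem_setOf_eq]
    constructor
    · intro h
      exact ⟨restr y n, fun i => h i, fun i => rfl⟩
    · rintro ⟨b, hb, hy⟩ i
      rw [hy ⟨i.1, lt_of_lt_of_le i.2 hkn⟩, hb i]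
  · intro b hb b' hb' hne
    simp only [Function.onFun]
    rw [Set.disjoint_left]
    intro y hy hy'
    exact hne (funext fun i => by rw [← hy i, ← hy' i])
  · intro b _
    exact measurableSet_pastCyl b

end Meas
end St5

namespace St5
open Finset MeasureTheory Real Filter Topology ENNReal

variable {A : Type*} [Fintype A] [DecidableEq A] [MeasurableSpace A] [MeasurableSingletonClass A]
  [TopologicalSpace A] [DiscreteTopology A]
variable {M : A → A → Bool} {ψ : (ℕ → A) → ℝ} {C α : ℝ}

lemma wordCompat_zero (M : A → A → Bool) (a : Fin 0 → A) (z : ℕ → A) : wordCompat M a z :=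
  ⟨fun h => absurd h (lt_irrefl 0), fun i h => absurd h (by omega)⟩

lemma univ_mass {νm : (ℕ → A) → Measure (ℕ → A)} (hνm : IsCondGibbs M ψ νm)
    {z : ℕ → A} (hz : z ∈ XplusSet M) : νm z Set.univ = 1 := by
  have h := (hνm z hz 0 (fun i => i.elim0)).1 (wordCompat_zero M _ z)
  rw [pastCyl_empty] at h
  rw [h]
  simp [birkhoffN]

/-- Extension of a word to a past, with filler `z`. -/
def wordPast {n : ℕ} (b : Fin n → A) (z : ℕ → A) : ℕ → A :=
  fun i => if h : i < n then b ⟨i, h⟩ else z i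

lemma restr_wordPast {n : ℕ} (b : Fin n → A) (z : ℕ → A) {k : ℕ} (hk : k ≤ n) :
    restr (wordPast b z) k = fun i : Fin k => b ⟨i.1, lt_of_lt_of_le i.2 hk⟩ := by
  funext i
  simp only [restr, wordPast, dif_pos (lt_of_lt_of_le i.2 hk)]

section Main

variable (hC : 0 < C) (hα0 : 0 < α) (hα1 : α < 1) (hψ : HolderWithN (XplusSet M) C α ψ)
  {νm : (ℕ → A) → Measure (ℕ → A)} (hνm : IsCondGibbs M ψ νm)
  {z z' : ℕ → A} (hz : z ∈ XplusSet M) (hz' : z' ∈ XplusSet M) (h0 : z 0 = z' 0)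

include hC hα0 hα1 hψ hνm hz hz' h0

lemma thetaPart_eq_birkhoff {n : ℕ} (b : Fin n → A) (hb : wordCompat M b z) :
    thetaPart ψ C α n (wordPast b z) z z' =
      birkhoffN ψ n (wordConcat b z) - birkhoffN ψ n (wordConcat b z') := by
  have hb' : wordCompat M b z' := wordCompat_congr M b h0 hb
  have hr : restr (wordPast b z) n = b := by
    rw [restr_wordPast b z (le_refl n)]
  have h1 : birkhoffN ψ n (wordConcat b z) =
      ∑ k ∈ Finset.range n, ψ (wordConcat (restr (wordPast b z) (k + 1)) z) := by
    have h := birkhoff_eq_sum ψ (wordPast b z) z n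
    rwa [hr] at h
  have h2 : birkhoffN ψ n (wordConcat b z') =
      ∑ k ∈ Finset.range n, ψ (wordConcat (restr (wordPast b z) (k + 1)) z') := by
    have h := birkhoff_eq_sum ψ (wordPast b z) z' n
    rwa [hr] at h
  rw [h1, h2, ← Finset.sum_sub_distrib]
  unfold thetaPart
  apply Finset.sum_congr rfl
  intro k hk
  have hkn : k + 1 ≤ n := Finset.mem_range.mp hk
  have hcomp : wordCompat M (restr (wordPast b z) (k + 1)) z := by
    rw [restr_wordPast b z hkn]
    exact wordCompat_prefix M hb (k + 1) hkn
  have hcomp' : wordCompat M (restr (wordPast b z) (k + 1)) z' :=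
    wordCompat_congr M _ h0 hcomp
  apply term_eq_raw
  unfold raw
  have hw : wordConcat (restr (wordPast b z) (k + 1)) z ∈ XplusSet M := wordConcat_mem M hz hcomp
  have hw' : wordConcat (restr (wordPast b z) (k + 1)) z' ∈ XplusSet M :=
    wordConcat_mem M hz' hcomp'
  apply hψ _ hw _ hw' (k + 1)
  intro j hj
  have := wordConcat_agree (z := z) (z' := z') (restr (wordPast b z) (k + 1)) (m := 0)
    (fun j hj => absurd hj (by omega)) j (by omega)
  exact this

lemma cyl_value {n : ℕ} (b : Fin n → A) :
    νm z' (pastCyl b) =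
      ENNReal.ofReal (Real.exp (thetaPart ψ C α n (wordPast b z) z z')) * νm z (pastCyl b) ∨
      (νm z' (pastCyl b) = 0 ∧ νm z (pastCyl b) = 0) := by
  by_cases hb : wordCompat M b z
  · left
    have hb' : wordCompat M b z' := wordCompat_congr M b h0 hb
    rw [(hνm z hz n b).1 hb, (hνm z' hz' n b).1 hb',
      thetaPart_eq_birkhoff hC hα0 hα1 hψ hνm hz hz' h0 b hb,
      ← ENNReal.ofReal_mul (Real.exp_nonneg _), ← Real.exp_add]
    congr 2
    ring
  · right
    refine ⟨(hνm z' hz' n b).2 (fun hb' => hb (wordCompat_congr M b h0.symm hb')),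
      (hνm z hz n b).2 hb⟩

lemma theta_near_thetaPart {n : ℕ} (b : Fin n → A) {y : ℕ → A} (hy : y ∈ pastCyl b) :
    |theta ψ C α y z z' - thetaPart ψ C α n (wordPast b z) z z'| ≤ (C * α / (1 - α)) * α ^ n := by
  have h1 : thetaPart ψ C α n y z z' = thetaPart ψ C α n (wordPast b z) z z' := by
    unfold thetaPart
    apply Finset.sum_congr rfl
    intro k hk
    have hkn : k < n := Finset.mem_range.mp hk
    apply term_congr
    intro i hi
    have hin : i < n := by omega
    rw [hy ⟨i, hin⟩]
    simp only [wordPast, dif_pos hin]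
  rw [← h1]
  exact theta_tail hC hα0 hα1 n y z z'

lemma rho_cyl_bounds {n : ℕ} (b : Fin n → A) :
    (νm z).withDensity (fun y => ENNReal.ofReal (Real.exp (theta ψ C α y z z'))) (pastCyl b) ≤
        ENNReal.ofReal (Real.exp ((C * α / (1 - α)) * α ^ n)) * νm z' (pastCyl b) ∧
      ENNReal.ofReal (Real.exp (-((C * α / (1 - α)) * α ^ n))) * νm z' (pastCyl b) ≤
        (νm z).withDensity (fun y => ENNReal.ofReal (Real.exp (theta ψ C α y z z'))) (pastCyl b) := by
  set δ := (C * α / (1 - α)) * α ^ n with hδdef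
  set t := thetaPart ψ C α n (wordPast b z) z z' with ht
  rcases cyl_value hC hα0 hα1 hψ hνm hz hz' h0 b with hcv | ⟨h1, h2⟩
  · have hρ : (νm z).withDensity (fun y => ENNReal.ofReal (Real.exp (theta ψ C α y z z')))
        (pastCyl b) = ∫⁻ y in pastCyl b, ENNReal.ofReal (Real.exp (theta ψ C α y z z')) ∂νm z :=
      withDensity_apply _ (measurableSet_pastCyl b)
    have hmeas : Measurable (fun y => ENNReal.ofReal (Real.exp (theta ψ C α y z z'))) :=
      ENNReal.measurable_ofReal.comp
        (Real.continuous_exp.comp (continuous_theta_y hC hα0 hα1 z z')).measurable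
    constructor
    · rw [hρ, hcv]
      calc ∫⁻ y in pastCyl b, ENNReal.ofReal (Real.exp (theta ψ C α y z z')) ∂νm z
          ≤ ∫⁻ _ in pastCyl b, ENNReal.ofReal (Real.exp (t + δ)) ∂νm z := by
            apply setLIntegral_mono measurable_const
            intro y hy
            apply ENNReal.ofReal_le_ofReal
            apply Real.exp_le_exp.mpr
            have := theta_near_thetaPart hC hα0 hα1 hψ hνm hz hz' h0 b hy
            rw [abs_le] at this
            linarith [this.2]
        _ = ENNReal.ofReal (Real.exp (t + δ)) * νm z (pastCyl b) := setLIntegral_const _ _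
        _ = ENNReal.ofReal (Real.exp δ) * (ENNReal.ofReal (Real.exp t) * νm z (pastCyl b)) := by
            rw [← mul_assoc, ← ENNReal.ofReal_mul (Real.exp_nonneg _), ← Real.exp_add, add_comm]
    · rw [hρ, hcv]
      calc ENNReal.ofReal (Real.exp (-δ)) * (ENNReal.ofReal (Real.exp t) * νm z (pastCyl b))
          = ENNReal.ofReal (Real.exp (t - δ)) * νm z (pastCyl b) := by
            rw [← mul_assoc, ← ENNReal.ofReal_mul (Real.exp_nonneg _), ← Real.exp_add]
            congr 2
            ring
        _ = ∫⁻ _ in pastCyl b, ENNReal.ofReal (Real.exp (t - δ)) ∂νm z :=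
            (setLIntegral_const _ _).symm
        _ ≤ ∫⁻ y in pastCyl b, ENNReal.ofReal (Real.exp (theta ψ C α y z z')) ∂νm z := by
            apply setLIntegral_mono hmeas
            intro y hy
            apply ENNReal.ofReal_le_ofReal
            apply Real.exp_le_exp.mpr
            have := theta_near_thetaPart hC hα0 hα1 hψ hνm hz hz' h0 b hy
            rw [abs_le] at this
            linarith [this.1]
  · have hρ0 : (νm z).withDensity (fun y => ENNReal.ofReal (Real.exp (theta ψ C α y z z')))
        (pastCyl b) = 0 := (withDensity_absolutelyContinuous _ _) h2
    rw [hρ0, h1, mul_zero, mul_zero]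
    exact ⟨le_refl 0, le_refl 0⟩

lemma rho_cyl_eq {k : ℕ} (a : Fin k → A) :
    (νm z).withDensity (fun y => ENNReal.ofReal (Real.exp (theta ψ C α y z z'))) (pastCyl a) =
      νm z' (pastCyl a) := by
  set ρ := (νm z).withDensity (fun y => ENNReal.ofReal (Real.exp (theta ψ C α y z z'))) with hρ
  have hfin' : IsFiniteMeasure (νm z') := ⟨by rw [univ_mass hνm hz']; exact one_lt_top⟩
  have hvne : νm z' (pastCyl a) ≠ ⊤ := measure_ne_top _ _
  have key : ∀ n, k ≤ n →
      ρ (pastCyl a) ≤ ENNReal.ofReal (Real.exp ((C * α / (1 - α)) * α ^ n)) * νm z' (pastCyl a) ∧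
      ENNReal.ofReal (Real.exp (-((C * α / (1 - α)) * α ^ n))) * νm z' (pastCyl a) ≤
        ρ (pastCyl a) := by
    intro n hkn
    have hsum1 := measure_cyl_sum ρ hkn a
    have hsum2 := measure_cyl_sum (νm z') hkn a
    constructor
    · rw [hsum1, hsum2, Finset.mul_sum]
      apply Finset.sum_le_sum
      intro b _
      exact (rho_cyl_bounds hC hα0 hα1 hψ hνm hz hz' h0 b).1
    · rw [hsum1, hsum2, Finset.mul_sum]
      apply Finset.sum_le_sum
      intro b _
      exact (rho_cyl_bounds hC hα0 hα1 hψ hνm hz hz' h0 b).2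
  have hδ : Tendsto (fun n : ℕ => (C * α / (1 - α)) * α ^ n) atTop (𝓝 0) := by
    have := (tendsto_pow_atTop_nhds_zero_of_lt_one hα0.le hα1).const_mul (C * α / (1 - α))
    simpa using this
  have htend1 : Tendsto (fun n : ℕ => ENNReal.ofReal
      (Real.exp ((C * α / (1 - α)) * α ^ n)) * νm z' (pastCyl a)) atTop
      (𝓝 (νm z' (pastCyl a))) := by
    have h1 : Tendsto (fun n : ℕ => ENNReal.ofReal (Real.exp ((C * α / (1 - α)) * α ^ n)))
        atTop (𝓝 1) := by
      have := (ENNReal.continuous_ofReal.tendsto (Real.exp 0)).comp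
        ((Real.continuous_exp.tendsto 0).comp hδ)
      simpa [Function.comp_def] using this
    have := ENNReal.Tendsto.mul_const h1 (Or.inr hvne)
    simpa using this
  have htend2 : Tendsto (fun n : ℕ => ENNReal.ofReal
      (Real.exp (-((C * α / (1 - α)) * α ^ n))) * νm z' (pastCyl a)) atTop
      (𝓝 (νm z' (pastCyl a))) := by
    have h1 : Tendsto (fun n : ℕ => ENNReal.ofReal (Real.exp (-((C * α / (1 - α)) * α ^ n))))
        atTop (𝓝 1) := by
      have hδ' : Tendsto (fun n : ℕ => -((C * α / (1 - α)) * α ^ n)) atTop (𝓝 0) := by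
        simpa using hδ.neg
      have := (ENNReal.continuous_ofReal.tendsto (Real.exp 0)).comp
        ((Real.continuous_exp.tendsto 0).comp hδ')
      simpa [Function.comp_def] using this
    have := ENNReal.Tendsto.mul_const h1 (Or.inr hvne)
    simpa using this
  apply le_antisymm
  · exact ge_of_tendsto htend1 (eventually_atTop.mpr ⟨k, fun n hn => (key n hn).1⟩)
  · exact le_of_tendsto htend2 (eventually_atTop.mpr ⟨k, fun n hn => (key n hn).2⟩)

lemma measure_eq_withDensity :
    νm z' = (νm z).withDensity (fun y => ENNReal.ofReal (Real.exp (theta ψ C α y z z'))) := by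
  have hfin' : IsFiniteMeasure (νm z') := ⟨by rw [univ_mass hνm hz']; exact one_lt_top⟩
  apply MeasureTheory.ext_of_generate_finite (cylSets A) generateFrom_cylSets isPiSystem_cylSets
  · rintro s ⟨k, a, rfl⟩
    exact (rho_cyl_eq hC hα0 hα1 hψ hνm hz hz' h0 a).symm
  · have h := (rho_cyl_eq hC hα0 hα1 hψ hνm hz hz' h0 (fun i : Fin 0 => i.elim0)).symm
    rwa [pastCyl_empty] at h

end Main
end St5

/-- Equivalence of the conditional measures `ν⁻_z` and `ν⁻_{z'}`: there is a continuous
density `e^θ` with `|θ(y,z,z')| ≤ c α^{ω(z,z')}`, given by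
`θ(y,z,z') = ∑_{k≥1} (ψ(T^{-k}(y·z)) - ψ(T^{-k}(y·z')))`. -/
theorem statement5 [Fintype A] [DecidableEq A] [MeasurableSpace A] [MeasurableSingletonClass A]
    [TopologicalSpace A] [DiscreteTopology A]
    (M : A → A → Bool) (ψ : (ℕ → A) → ℝ) (C α : ℝ) (hC : 0 < C) (hα0 : 0 < α) (hα1 : α < 1)
    (hψ : HolderWithN (XplusSet M) C α ψ)
    (hnorm : ∀ z ∈ XplusSet M, transfer M ψ (fun _ => (1 : ℝ)) z = 1)
    (νm : (ℕ → A) → Measure (ℕ → A)) (hνm : IsCondGibbs M ψ νm) :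
    ∃ θ : (ℕ → A) → (ℕ → A) → (ℕ → A) → ℝ,
      ContinuousOn (fun p : (ℕ → A) × (ℕ → A) × (ℕ → A) => θ p.1 p.2.1 p.2.2)
        {p | p.2.1 ∈ XplusSet M ∧ p.2.2 ∈ XplusSet M ∧ p.2.1 0 = p.2.2 0 ∧
          pastCompat M p.1 p.2.1} ∧
      (∀ z ∈ XplusSet M, ∀ z' ∈ XplusSet M, z 0 = z' 0 →
        ∀ φ : (ℕ → A) → ℝ, Continuous φ →
          ∫ y, φ y ∂νm z' = ∫ y, φ y * Real.exp (θ y z z') ∂νm z) ∧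
      (∃ c : ℝ, 0 < c ∧ ∀ z ∈ XplusSet M, ∀ z' ∈ XplusSet M, z 0 = z' 0 →
        ∀ y : ℕ → A, pastCompat M y z →
          ∀ k : ℕ, (∀ j < k, z j = z' j) → |θ y z z'| ≤ c * α ^ k) ∧
      (∀ z ∈ XplusSet M, ∀ z' ∈ XplusSet M, z 0 = z' 0 →
        ∀ y : ℕ → A, pastCompat M y z →
          θ y z z' = ∑' k : ℕ, (ψ (futurePart (shiftZinv^[k + 1] (concat y z))) -
            ψ (futurePart (shiftZinv^[k + 1] (concat y z'))))) := by
  refine ⟨St5.theta ψ C α, ?_, ?_, ?_, ?_⟩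
  · exact St5.continuousOn_theta hC hα0 hα1 hψ
  · intro z hz z' hz' h0 φ hφ
    rw [St5.measure_eq_withDensity hC hα0 hα1 hψ hνm hz hz' h0]
    have hmeas : Measurable (fun y => Real.toNNReal (Real.exp (St5.theta ψ C α y z z'))) :=
      (Real.continuous_exp.comp (St5.continuous_theta_y hC hα0 hα1 z z')).measurable.real_toNNReal
    have hd : (fun y => ENNReal.ofReal (Real.exp (St5.theta ψ C α y z z'))) =
        fun y => ((Real.toNNReal (Real.exp (St5.theta ψ C α y z z')) : NNReal) : ENNReal) := rfl
    rw [hd, integral_withDensity_eq_integral_smul hmeas φ]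
    have : (fun y => Real.toNNReal (Real.exp (St5.theta ψ C α y z z')) • φ y) =
        fun y => φ y * Real.exp (St5.theta ψ C α y z z') := by
      funext y
      rw [NNReal.smul_def, Real.coe_toNNReal _ (Real.exp_nonneg _), smul_eq_mul]
      ring
    rw [this]
  · refine ⟨C * α / (1 - α), div_pos (mul_pos hC hα0) (by linarith), ?_⟩
    intro z hz z' hz' h0 y hy k hk
    exact St5.abs_theta_le hC hα0 hα1 hψ hz hz' h0 hy hk
  · intro z hz z' hz' h0 y hy
    unfold St5.theta
    apply tsum_congr
    intro k
    rw [St5.futurePart_eq y z k, St5.futurePart_eq y z' k]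
    exact St5.term_eq_raw k y z z'
      (St5.abs_raw_le hψ hz hz' h0 hy (m := 0) (fun j hj => absurd hj (by omega)) k)
end

section
/- Let g₀ be a continuous function on X⁺. Then L_ψ g₀ = 0 if and only if for every z ∈ X⁺, the sequence of random variables y ↦ Š_n g₀(y·z), n ≥ 0, on (X⁻_z, ν⁻_z) is a martingale with respect to the filtration generated by the coordinates (y_{−1},...,y_{−n}). -/
open MeasureTheory

variable {A : Type*}

/-- The reversed Birkhoff sums `Š_n g(x) = ∑_{k=1}^n g(T^{-k} x)` of a function `g`
depending only on the future coordinates. -/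
noncomputable def revSumP (g : (ℕ → A) → ℝ) (n : ℕ) (x : ℤ → A) : ℝ :=
  ∑ k ∈ Finset.range n, g (futurePart (shiftZinv^[k + 1] x))

/-- The filtration `𝓕_n` on the space of pasts generated by the coordinates
`y_{-1}, ..., y_{-n}` (i.e. `y 0, ..., y (n-1)`); `𝓕_0` is the trivial σ-algebra. -/
def pastFiltration (A : Type*) [MeasurableSpace A] :
    MeasureTheory.Filtration ℕ (inferInstance : MeasurableSpace (ℕ → A)) where
  seq n := MeasurableSpace.comap (fun (y : ℕ → A) (i : Fin n) => y i) inferInstance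
  mono' := by
    intro n m hnm
    dsimp only
    have heq : (fun (y : ℕ → A) (i : Fin n) => y i) =
        (fun (v : Fin m → A) (i : Fin n) => v (Fin.castLE hnm i)) ∘
          (fun (y : ℕ → A) (i : Fin m) => y i) := rfl
    rw [heq, ← MeasurableSpace.comap_comp]
    exact MeasurableSpace.comap_mono
      ((measurable_pi_lambda _ fun i => measurable_pi_apply _).comap_le)
  le' n := (measurable_pi_lambda _ fun i => measurable_pi_apply _).comap_le
set_option linter.unusedSectionVars false
section Aux

variable [Fintype A] [DecidableEq A] [MeasurableSpace A] [MeasurableSingletonClass A]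

lemma shiftZinv_iter (j : ℕ) (x : ℤ → A) (n : ℤ) : shiftZinv^[j] x n = x (n - j) := by
  induction j generalizing x n with
  | zero => simp
  | succ j ih =>
    rw [Function.iterate_succ_apply, ih]
    show x (n - j - 1) = x (n - (j + 1 : ℕ))
    congr 1
    push_cast
    ring

lemma futurePart_iter (y z : ℕ → A) (j : ℕ) :
    futurePart (shiftZinv^[j + 1] (concat y z)) =
      fun m => if m < j + 1 then y (j - m) else z (m - (j + 1)) := by
  funext m
  show shiftZinv^[j + 1] (concat y z) m = _
  rw [shiftZinv_iter]
  show (if 0 ≤ (m : ℤ) - ((j : ℕ) + 1 : ℕ) then z ((m : ℤ) - ((j : ℕ) + 1 : ℕ)).toNat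
      else y (-(((m : ℤ) - ((j : ℕ) + 1 : ℕ)) + 1)).toNat) = _
  by_cases h : m < j + 1
  · rw [if_neg (by push_cast; omega), if_pos h]
    congr 1
    push_cast
    omega
  · rw [if_pos (by push_cast; omega), if_neg h]
    congr 1
    push_cast
    omega

lemma revSumP_succ (g : (ℕ → A) → ℝ) (n : ℕ) (x : ℤ → A) :
    revSumP g (n + 1) x = revSumP g n x + g (futurePart (shiftZinv^[n + 1] x)) :=
  Finset.sum_range_succ _ n

lemma revSumP_one (g : (ℕ → A) → ℝ) (x : ℤ → A) :
    revSumP g 1 x = g (futurePart (shiftZinv^[0 + 1] x)) := by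
  simp [revSumP]

/-- Prepending a letter `b` to a word `a` (at the far end, index `n`). -/
def extWord {n : ℕ} (a : Fin n → A) (b : A) : Fin (n + 1) → A :=
  fun i => if h : (i : ℕ) < n then a ⟨i, h⟩ else b

lemma extWord_apply_lt {n : ℕ} (a : Fin n → A) (b : A) (i : Fin (n + 1)) (h : (i : ℕ) < n) :
    extWord a b i = a ⟨i, h⟩ := dif_pos h

lemma extWord_apply_ge {n : ℕ} (a : Fin n → A) (b : A) (i : Fin (n + 1)) (h : ¬ (i : ℕ) < n) :
    extWord a b i = b := dif_neg h

lemma wordConcat_lt {k : ℕ} (a : Fin k → A) (z : ℕ → A) {m : ℕ} (h : m < k) :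
    wordConcat a z m = a ⟨k - 1 - m, by omega⟩ := dif_pos h

lemma wordConcat_ge {k : ℕ} (a : Fin k → A) (z : ℕ → A) {m : ℕ} (h : ¬ m < k) :
    wordConcat a z m = z (m - k) := dif_neg h

lemma consN_zero (b : A) (w : ℕ → A) : consN b w 0 = b := rfl

lemma consN_succ (b : A) (w : ℕ → A) {m : ℕ} (h : m ≠ 0) : consN b w m = w (m - 1) := if_neg h

lemma fin_congr {k : ℕ} (a : Fin k → A) {i j : ℕ} {hi : i < k} {hj : j < k} (h : i = j) :
    a ⟨i, hi⟩ = a ⟨j, hj⟩ := by subst h; rfl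

lemma wordConcat_extWord {n : ℕ} (a : Fin n → A) (b : A) (z : ℕ → A) :
    wordConcat (extWord a b) z = consN b (wordConcat a z) := by
  funext m
  rcases Nat.eq_zero_or_pos m with rfl | hm
  · rw [wordConcat_lt (extWord a b) z (by omega : 0 < n + 1), consN_zero,
      extWord_apply_ge a b _ (by show ¬ n + 1 - 1 - 0 < n; omega)]
  · by_cases h : m < n + 1
    · rw [wordConcat_lt _ _ h, consN_succ _ _ (by omega),
        wordConcat_lt a z (show m - 1 < n by omega),
        extWord_apply_lt a b _ (by show n + 1 - 1 - m < n; omega)]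
      exact fin_congr a (by show n + 1 - 1 - m = n - 1 - (m - 1); omega)
    · rw [wordConcat_ge _ _ h, consN_succ _ _ (by omega),
        wordConcat_ge a z (show ¬ m - 1 < n by omega)]
      congr 1
      omega

lemma pastCyl_eq_preimage {n : ℕ} (a : Fin n → A) :
    pastCyl a = (fun (y : ℕ → A) (i : Fin n) => y i) ⁻¹' {a} := by
  ext y
  simp only [pastCyl, Set.mem_setOf_eq, Set.mem_preimage, Set.mem_singleton_iff, funext_iff]

lemma measurableSet_pastCyl_filtration {n : ℕ} (a : Fin n → A) :
    MeasurableSet[pastFiltration A n] (pastCyl a) :=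
  ⟨{a}, MeasurableSet.singleton a, (pastCyl_eq_preimage a).symm⟩

lemma measurableSet_pastCyl {n : ℕ} (a : Fin n → A) : MeasurableSet (pastCyl a) :=
  (pastFiltration A).le n _ (measurableSet_pastCyl_filtration a)

lemma shiftN_consN (b : A) (w : ℕ → A) : shiftN (consN b w) = w := by
  funext m
  simp [shiftN, consN]

lemma birkhoffN_succ (ψ : (ℕ → A) → ℝ) (n : ℕ) (b : A) (w : ℕ → A) :
    birkhoffN ψ (n + 1) (consN b w) = ψ (consN b w) + birkhoffN ψ n w := by
  unfold birkhoffN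
  rw [Finset.sum_range_succ']
  simp only [Function.iterate_succ_apply, shiftN_consN, Function.iterate_zero_apply]
  ring

lemma wordCompat_zero (M : A → A → Bool) (a : Fin 0 → A) (z : ℕ → A) : wordCompat M a z :=
  ⟨fun h => absurd h (by omega), fun i h => absurd h (by omega)⟩

lemma wordConcat_zero (a : Fin 0 → A) (z : ℕ → A) : wordConcat a z = z := by
  funext m
  rw [wordConcat_ge a z (by omega)]
  congr 1

lemma pastCyl_zero (a : Fin 0 → A) : pastCyl a = Set.univ :=
  Set.eq_univ_of_forall fun y i => i.elim0

lemma birkhoffN_zero (ψ : (ℕ → A) → ℝ) (x : ℕ → A) : birkhoffN ψ 0 x = 0 := by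
  simp [birkhoffN]

lemma isProbability (M : A → A → Bool) (ψ : (ℕ → A) → ℝ) (νm : (ℕ → A) → Measure (ℕ → A))
    (hνm : IsCondGibbs M ψ νm) {z : ℕ → A} (hz : z ∈ XplusSet M) :
    IsProbabilityMeasure (νm z) := by
  constructor
  have h := (hνm z hz 0 (fun i => i.elim0)).1 (wordCompat_zero M _ z)
  rw [pastCyl_zero] at h
  rw [h, birkhoffN_zero]
  simp

lemma wordCompat_extWord_iff (M : A → A → Bool) {n : ℕ} (a : Fin n → A) (b : A) (z : ℕ → A) :
    wordCompat M (extWord a b) z ↔ wordCompat M a z ∧ M b (wordConcat a z 0) = true := by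
  constructor
  · rintro ⟨h1, h2⟩
    refine ⟨⟨fun hn => ?_, fun i hi => ?_⟩, ?_⟩
    · have := h1 (by omega)
      rwa [extWord_apply_lt a b _ (by exact hn)] at this
    · have := h2 i (by omega)
      rwa [extWord_apply_lt a b _ (by exact hi),
        extWord_apply_lt a b _ (by show i < n; omega)] at this
    · rcases Nat.eq_zero_or_pos n with rfl | hn
      · have := h1 (by omega)
        rw [extWord_apply_ge a b _ (by omega)] at this
        rw [wordConcat_ge a z (by omega)]
        exact this
      · have := h2 (n - 1) (by omega)
        rw [extWord_apply_ge a b _ (by show ¬ n - 1 + 1 < n; omega),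
          extWord_apply_lt a b _ (by show n - 1 < n; omega)] at this
        rw [wordConcat_lt a z hn]
        rw [show (M b (a ⟨n - 1 - 0, by omega⟩) = true) = (M b (a ⟨n - 1, by omega⟩) = true) from
          by rw [fin_congr a (by omega : n - 1 - 0 = n - 1)]]
        exact this
  · rintro ⟨⟨h1, h2⟩, hb⟩
    refine ⟨fun _ => ?_, fun i hi => ?_⟩
    · rcases Nat.eq_zero_or_pos n with rfl | hn
      · rw [extWord_apply_ge a b _ (by omega)]
        rw [wordConcat_ge a z (by omega)] at hb
        exact hb
      · rw [extWord_apply_lt a b _ (by show 0 < n; omega)]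
        exact h1 hn
    · by_cases h : i + 1 < n
      · rw [extWord_apply_lt a b _ (by exact h), extWord_apply_lt a b _ (by show i < n; omega)]
        exact h2 i h
      · have hin : i = n - 1 := by omega
        have hn : 0 < n := by omega
        rw [extWord_apply_ge a b _ (by show ¬ i + 1 < n; omega),
          extWord_apply_lt a b _ (by show i < n; omega)]
        rw [wordConcat_lt a z hn] at hb
        rw [show (M b (a ⟨i, by omega⟩) = true) = (M b (a ⟨n - 1 - 0, by omega⟩) = true) from
          by rw [fin_congr a (by omega : i = n - 1 - 0)]]
        exact hb

lemma wordConcat_mem_xplus (M : A → A → Bool) {k : ℕ} (a : Fin k → A) {z : ℕ → A}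
    (hz : z ∈ XplusSet M) (ha : wordCompat M a z) : wordConcat a z ∈ XplusSet M := by
  intro m
  by_cases h1 : m + 1 < k
  · rw [wordConcat_lt a z (by omega : m < k), wordConcat_lt a z h1]
    have := ha.2 (k - 1 - (m + 1)) (by omega)
    have e : (⟨k - 1 - m, by omega⟩ : Fin k) = ⟨k - 1 - (m + 1) + 1, by omega⟩ :=
      Fin.ext (by show k - 1 - m = k - 1 - (m + 1) + 1; omega)
    rw [e]
    exact this
  · by_cases h2 : m < k
    · rw [wordConcat_lt a z h2, wordConcat_ge a z (by omega)]
      have := ha.1 (by omega)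
      have e : (⟨k - 1 - m, by omega⟩ : Fin k) = ⟨0, by omega⟩ :=
        Fin.ext (by show k - 1 - m = 0; omega)
      have e2 : m + 1 - k = 0 := by omega
      rw [e, e2]
      exact this
    · rw [wordConcat_ge a z h2, wordConcat_ge a z (by omega)]
      have := hz (m - k)
      have e2 : m + 1 - k = m - k + 1 := by omega
      rw [e2]
      exact this

lemma integrable_of_dep [Nonempty A] {μ : Measure (ℕ → A)} [IsFiniteMeasure μ]
    (f : (ℕ → A) → ℝ) (n : ℕ)
    (hdep : ∀ y y' : ℕ → A, (∀ i, i < n → y i = y' i) → f y = f y') :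
    Integrable f μ := by
  classical
  let F : (Fin n → A) → ℝ :=
    fun v => f (fun i => if h : i < n then v ⟨i, h⟩ else Classical.arbitrary A)
  have hfe : f = fun y => F (fun i : Fin n => y i) := by
    funext y
    exact hdep y _ fun i hi => by rw [dif_pos hi]
  have hFm : Measurable F := Measurable.of_discrete
  have hπ : Measurable (fun (y : ℕ → A) (i : Fin n) => y i) :=
    measurable_pi_lambda _ fun i => measurable_pi_apply _
  obtain ⟨C, hC⟩ := Finite.exists_le fun v => |F v|
  rw [hfe]
  refine (integrable_const C).mono' ((hFm.comp hπ).aestronglyMeasurable) ?_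
  exact Filter.Eventually.of_forall fun y => by rw [Real.norm_eq_abs]; exact hC (fun i : Fin n => y i)

lemma stronglyMeasurable_of_dep [Nonempty A] (f : (ℕ → A) → ℝ) (n : ℕ)
    (hdep : ∀ y y' : ℕ → A, (∀ i, i < n → y i = y' i) → f y = f y') :
    StronglyMeasurable[pastFiltration A n] f := by
  classical
  let F : (Fin n → A) → ℝ :=
    fun v => f (fun i => if h : i < n then v ⟨i, h⟩ else Classical.arbitrary A)
  have hfe : f = fun y => F (fun i : Fin n => y i) := by
    funext y
    exact hdep y _ fun i hi => by rw [dif_pos hi]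
  have hπ : @Measurable (ℕ → A) (Fin n → A) (pastFiltration A n) _ (fun y i => y i) :=
    fun s hs => ⟨s, hs, rfl⟩
  rw [hfe]
  exact ((Measurable.of_discrete (f := F)).comp hπ).stronglyMeasurable

lemma revSumP_concat (g : (ℕ → A) → ℝ) (n : ℕ) (y z : ℕ → A) :
    revSumP g n (concat y z) =
      ∑ k ∈ Finset.range n, g (fun m => if m < k + 1 then y (k - m) else z (m - (k + 1))) :=
  Finset.sum_congr rfl fun k _ => by rw [futurePart_iter]

lemma dep_revSumP (g : (ℕ → A) → ℝ) (n : ℕ) (z : ℕ → A) :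
    ∀ y y' : ℕ → A, (∀ i, i < n → y i = y' i) →
      revSumP g n (concat y z) = revSumP g n (concat y' z) := by
  intro y y' h
  rw [revSumP_concat, revSumP_concat]
  refine Finset.sum_congr rfl fun k hk => ?_
  congr 1
  funext m
  by_cases hm : m < k + 1
  · rw [if_pos hm, if_pos hm, h _ (lt_of_le_of_lt (Nat.sub_le k m) (Finset.mem_range.1 hk))]
  · rw [if_neg hm, if_neg hm]

lemma key_integral (M : A → A → Bool) (ψ : (ℕ → A) → ℝ) (νm : (ℕ → A) → Measure (ℕ → A))
    (hνm : IsCondGibbs M ψ νm) (g₀ : (ℕ → A) → ℝ) {z : ℕ → A} (hz : z ∈ XplusSet M)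
    {n : ℕ} (a : Fin n → A) (ha : wordCompat M a z) :
    ∫ y in pastCyl a, g₀ (fun m => if m < n + 1 then y (n - m) else z (m - (n + 1))) ∂(νm z)
      = Real.exp (-birkhoffN ψ n (wordConcat a z)) * transfer M ψ g₀ (wordConcat a z) := by
  classical
  haveI : Nonempty A := ⟨z 0⟩
  haveI := isProbability M ψ νm hνm hz
  have hdec : pastCyl a = ⋃ b ∈ (Finset.univ : Finset A), pastCyl (extWord a b) := by
    ext y
    simp only [Set.mem_iUnion, Finset.mem_univ, exists_true_left, exists_prop, true_and]
    constructor
    · intro hy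
      refine ⟨y n, fun i => ?_⟩
      by_cases h : (i : ℕ) < n
      · rw [extWord_apply_lt a _ i h]
        exact hy ⟨i, h⟩
      · rw [extWord_apply_ge a _ i h]
        have : (i : ℕ) = n := by omega
        rw [this]
    · rintro ⟨b, hy⟩
      intro i
      have := hy ⟨(i : ℕ), by omega⟩
      rwa [extWord_apply_lt a b _ (by exact i.isLt)] at this
  have hint : Integrable
      (fun y : ℕ → A => g₀ (fun m => if m < n + 1 then y (n - m) else z (m - (n + 1)))) (νm z) := by
    refine integrable_of_dep _ (n + 1) fun y y' h => ?_
    congr 1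
    funext m
    by_cases hm : m < n + 1
    · rw [if_pos hm, if_pos hm, h _ (by omega)]
    · rw [if_neg hm, if_neg hm]
  rw [hdec, integral_biUnion_finset Finset.univ (fun b _ => measurableSet_pastCyl _)
    ?_ (fun b _ => hint.integrableOn)]
  · have hval : ∀ b : A,
        (∫ y in pastCyl (extWord a b),
          g₀ (fun m => if m < n + 1 then y (n - m) else z (m - (n + 1))) ∂(νm z))
        = (νm z (pastCyl (extWord a b))).toReal * g₀ (consN b (wordConcat a z)) := by
      intro b
      rw [setIntegral_congr_fun (measurableSet_pastCyl _)
        (g := fun _ => g₀ (consN b (wordConcat a z))) ?_, setIntegral_const, smul_eq_mul, measureReal_def]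
      intro y hy
      have harg : (fun m => if m < n + 1 then y (n - m) else z (m - (n + 1)))
          = consN b (wordConcat a z) := by
        funext m
        by_cases hm : m < n + 1
        · rw [if_pos hm]
          have hyv := hy ⟨n - m, by omega⟩
          rcases Nat.eq_zero_or_pos m with rfl | hm0
          · rw [extWord_apply_ge a b _ (by show ¬ n - 0 < n; omega)] at hyv
            exact hyv.trans (consN_zero b _).symm
          · rw [extWord_apply_lt a b _ (by show n - m < n; omega)] at hyv
            rw [consN_succ b _ (by omega), wordConcat_lt a z (show m - 1 < n by omega)]
            exact hyv.trans (fin_congr a (by show n - m = n - 1 - (m - 1); omega))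
        · rw [if_neg hm, consN_succ b _ (by omega),
            wordConcat_ge a z (show ¬ m - 1 < n by omega)]
          congr 1
          omega
      show g₀ _ = g₀ _
      rw [harg]
    have hmeas : ∀ b : A, νm z (pastCyl (extWord a b)) =
        if M b (wordConcat a z 0) = true then
          ENNReal.ofReal (Real.exp (-(ψ (consN b (wordConcat a z))
            + birkhoffN ψ n (wordConcat a z)))) else 0 := by
      intro b
      by_cases hb : M b (wordConcat a z 0) = true
      · rw [if_pos hb, (hνm z hz (n + 1) (extWord a b)).1
          ((wordCompat_extWord_iff M a b z).2 ⟨ha, hb⟩), wordConcat_extWord, birkhoffN_succ]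
      · rw [if_neg hb]
        refine (hνm z hz (n + 1) (extWord a b)).2 fun hc => ?_
        exact hb ((wordCompat_extWord_iff M a b z).1 hc).2
    calc ∑ b : A, ∫ y in pastCyl (extWord a b),
            g₀ (fun m => if m < n + 1 then y (n - m) else z (m - (n + 1))) ∂(νm z)
        = ∑ b : A, (if M b (wordConcat a z 0) = true then
            Real.exp (-(ψ (consN b (wordConcat a z)) + birkhoffN ψ n (wordConcat a z)))
              * g₀ (consN b (wordConcat a z)) else 0) := by
          refine Finset.sum_congr rfl fun b _ => ?_
          rw [hval b, hmeas b]
          split_ifs with h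
          · rw [ENNReal.toReal_ofReal (Real.exp_nonneg _)]
          · simp
      _ = ∑ b ∈ Finset.univ.filter (fun b => M b (wordConcat a z 0) = true),
            Real.exp (-(ψ (consN b (wordConcat a z)) + birkhoffN ψ n (wordConcat a z)))
              * g₀ (consN b (wordConcat a z)) := (Finset.sum_filter _ _).symm
      _ = Real.exp (-birkhoffN ψ n (wordConcat a z)) * transfer M ψ g₀ (wordConcat a z) := by
          rw [transfer, Finset.mul_sum]
          refine Finset.sum_congr rfl fun b _ => ?_
          rw [neg_add, Real.exp_add]
          ring
  · intro b _ b' _ hbb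
    refine Set.disjoint_left.2 fun y hy hy' => hbb ?_
    have h1 := hy ⟨n, by omega⟩
    have h2 := hy' ⟨n, by omega⟩
    rw [extWord_apply_ge a b _ (by show ¬ n < n; omega)] at h1
    rw [extWord_apply_ge a b' _ (by show ¬ n < n; omega)] at h2
    rw [← h1, ← h2]

end Aux

/-- Martingale characterization of `L_ψ g₀ = 0`: for a continuous `g₀` on `X⁺`,
`L_ψ g₀ = 0` iff for every `z ∈ X⁺` the reversed Birkhoff sums `y ↦ Š_n g₀(y·z)` form a
martingale on `(X⁻_z, ν⁻_z)` with respect to the past coordinate filtration. -/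
theorem statement7 [Fintype A] [DecidableEq A] [MeasurableSpace A] [MeasurableSingletonClass A]
    [TopologicalSpace A] [DiscreteTopology A]
    (M : A → A → Bool) (ψ : (ℕ → A) → ℝ) (hψcont : Continuous ψ)
    (hnorm : ∀ z ∈ XplusSet M, transfer M ψ (fun _ => (1 : ℝ)) z = 1)
    (νm : (ℕ → A) → Measure (ℕ → A)) (hνm : IsCondGibbs M ψ νm)
    (g₀ : (ℕ → A) → ℝ) (hg₀cont : Continuous g₀) :
    (∀ z ∈ XplusSet M, transfer M ψ g₀ z = 0) ↔
      ∀ z ∈ XplusSet M,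
        MeasureTheory.Martingale (fun (n : ℕ) (y : ℕ → A) => revSumP g₀ n (concat y z))
          (pastFiltration A) (νm z) := by
  classical
  constructor
  · intro hT z hz
    haveI : Nonempty A := ⟨z 0⟩
    haveI := isProbability M ψ νm hνm hz
    refine martingale_of_setIntegral_eq_succ
      (fun n => stronglyMeasurable_of_dep _ n (dep_revSumP g₀ n z))
      (fun n => integrable_of_dep _ n (dep_revSumP g₀ n z)) ?_
    intro n s hs
    -- decompose s into cylinders
    obtain ⟨t, -, rfl⟩ := hs
    have hcyl : ∀ a : Fin n → A,
        (∫ y in pastCyl a, revSumP g₀ n (concat y z) ∂(νm z))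
          = ∫ y in pastCyl a, revSumP g₀ (n + 1) (concat y z) ∂(νm z) := by
      intro a
      by_cases hc : wordCompat M a z
      · have hsplit : (fun y : ℕ → A => revSumP g₀ (n + 1) (concat y z))
            = fun y => revSumP g₀ n (concat y z)
              + g₀ (fun m => if m < n + 1 then y (n - m) else z (m - (n + 1))) := by
          funext y
          rw [revSumP_succ, futurePart_iter]
        rw [hsplit]
        have hint1 : Integrable (fun y : ℕ → A => revSumP g₀ n (concat y z)) (νm z) :=
          integrable_of_dep _ n (dep_revSumP g₀ n z)
        have hint2 : Integrable
            (fun y : ℕ → A => g₀ (fun m => if m < n + 1 then y (n - m) else z (m - (n + 1))))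
            (νm z) := by
          refine integrable_of_dep _ (n + 1) fun y y' h => ?_
          congr 1
          funext m
          by_cases hm : m < n + 1
          · rw [if_pos hm, if_pos hm, h _ (by omega)]
          · rw [if_neg hm, if_neg hm]
        rw [integral_add hint1.integrableOn hint2.integrableOn,
          key_integral M ψ νm hνm g₀ hz a hc, hT _ (wordConcat_mem_xplus M a hz hc),
          mul_zero, add_zero]
      · have h0 : (νm z).restrict (pastCyl a) = 0 :=
          Measure.restrict_eq_zero.2 ((hνm z hz n a).2 hc)
        rw [h0]
        simp
    have hset : (fun (y : ℕ → A) (i : Fin n) => y i) ⁻¹' t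
        = ⋃ v ∈ (Set.toFinite t).toFinset, pastCyl v := by
      ext y
      simp only [Set.mem_preimage, Set.mem_iUnion, Set.Finite.mem_toFinset, exists_prop]
      constructor
      · intro h
        exact ⟨_, h, fun i => rfl⟩
      · rintro ⟨v, hv, hyv⟩
        have : (fun i : Fin n => y i) = v := funext hyv
        rwa [this]
    have hintn : Integrable (fun y : ℕ → A => revSumP g₀ n (concat y z)) (νm z) :=
      integrable_of_dep _ n (dep_revSumP g₀ n z)
    have hintn1 : Integrable (fun y : ℕ → A => revSumP g₀ (n + 1) (concat y z)) (νm z) :=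
      integrable_of_dep _ (n + 1) (dep_revSumP g₀ (n + 1) z)
    have hdisj : Set.Pairwise ((Set.toFinite t).toFinset : Set (Fin n → A))
        (Function.onFun Disjoint fun v => pastCyl v) := by
      intro v _ v' _ hvv
      refine Set.disjoint_left.2 fun y hy hy' => hvv ?_
      have h1 : (fun i : Fin n => y i) = v := funext hy
      have h2 : (fun i : Fin n => y i) = v' := funext hy'
      rw [← h1, ← h2]
    rw [hset, integral_biUnion_finset _ (fun v _ => measurableSet_pastCyl v) hdisj
        (fun v _ => hintn.integrableOn),
      integral_biUnion_finset _ (fun v _ => measurableSet_pastCyl v) hdisj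
        (fun v _ => hintn1.integrableOn)]
    exact Finset.sum_congr rfl fun v _ => hcyl v
  · intro hM z hz
    haveI : Nonempty A := ⟨z 0⟩
    haveI := isProbability M ψ νm hνm hz
    have h := (hM z hz).setIntegral_eq (zero_le_one) (s := Set.univ)
      (@MeasurableSet.univ _ (pastFiltration A 0))
    have h0 : (fun y : ℕ → A => revSumP g₀ 0 (concat y z)) = fun _ => (0 : ℝ) := by
      funext y
      simp [revSumP]
    have h1 : (fun y : ℕ → A => revSumP g₀ 1 (concat y z))
        = fun y => g₀ (fun m => if m < 0 + 1 then y (0 - m) else z (m - (0 + 1))) := by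
      funext y
      rw [revSumP_one, futurePart_iter]
    rw [h0, h1] at h
    have hk := key_integral M ψ νm hνm g₀ hz (n := 0) (fun i => i.elim0)
      (wordCompat_zero M _ z)
    rw [pastCyl_zero, wordConcat_zero, birkhoffN_zero] at hk
    simp only [neg_zero, Real.exp_zero, one_mul] at hk
    rw [← hk, ← h]
    simp
end

section
/- Let ε ∈ (0,1/4) and let ρ_ε²(u) = ε^{-2} ρ(u/ε²) where ρ is the (non-negative, integrable, total mass 1) Fourier transform density of t ↦ (1−|t|)1{|t|≤1}. If f, g : ℝ → ℝ₊ are integrable and f(t) ≤ g(t+v) for all t ∈ ℝ and all |v| ≤ ε, then for all u ∈ ℝ: f(u) ≤ (1−2ε)^{-1} (g * ρ_{ε²})(u) and g(u) ≥ (f * ρ_{ε²})(u) − ∫_{|v|>ε} f(u−v) ρ_{ε²}(v) dv. -/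
open MeasureTheory Real Complex FourierTransform intervalIntegral

/-- The kernel `ρ`: the Fourier transform of the triangle function
`t ↦ (1-|t|) 1_{|t| ≤ 1}` (the Fejér kernel, a non-negative probability density). -/
noncomputable def triangleFT (u : ℝ) : ℝ :=
  (∫ t : ℝ, Complex.exp (-(2 * Real.pi * t * u) * Complex.I) *
    (if |t| ≤ 1 then ((1 - |t| : ℝ) : ℂ) else 0)).re

/-- The rescaled kernel `ρ_δ(u) = δ⁻¹ ρ(u/δ)`. -/
noncomputable def smoothK (δ u : ℝ) : ℝ := δ⁻¹ * triangleFT (u / δ)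


noncomputable def triFn (t : ℝ) : ℂ := if |t| ≤ 1 then ((1 - |t| : ℝ) : ℂ) else 0

lemma triFn_eq (t : ℝ) : triFn t = ((max (1 - |t|) 0 : ℝ) : ℂ) := by
  unfold triFn
  split_ifs with h
  · rw [max_eq_left (by linarith)]
  · rw [max_eq_right (by push_neg at h; linarith)]; simp

lemma triFn_continuous : Continuous triFn := by
  have : triFn = fun t => ((max (1 - |t|) 0 : ℝ) : ℂ) := funext triFn_eq
  rw [this]
  fun_prop

lemma triFn_integrable : Integrable triFn := by
  apply Continuous.integrable_of_hasCompactSupport triFn_continuous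
  apply HasCompactSupport.intro (isCompact_Icc (a := (-1:ℝ)) (b := 1))
  intro t ht
  simp only [Set.mem_Icc, not_and_or, not_le] at ht
  unfold triFn
  rw [if_neg]
  rcases ht with h | h
  · rw [abs_of_neg (by linarith)]; push_neg; linarith
  · rw [abs_of_pos (by linarith)]; push_neg; linarith

lemma hasDerivAt_cexp_mul (c : ℂ) (t : ℝ) :
    HasDerivAt (fun s : ℝ => Complex.exp (c * s)) (c * Complex.exp (c * t)) t := by
  have h1 : HasDerivAt (fun z : ℂ => Complex.exp (c * z)) (c * Complex.exp (c * t)) (t : ℂ) := by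
    simpa [mul_comm] using ((hasDerivAt_id ((t : ℝ) : ℂ)).const_mul c).cexp
  exact h1.comp_ofReal

lemma part1 (c : ℂ) (hc : c ≠ 0) :
    ∫ t in (0:ℝ)..1, Complex.exp (c * t) * (1 - t) =
      Complex.exp c / c ^ 2 - (1 / c + 1 / c ^ 2) := by
  have key : ∀ t ∈ Set.uIcc (0:ℝ) 1, HasDerivAt
      (fun s : ℝ => (1/c) * (1 - s) * Complex.exp (c * s) + (1/c^2) * Complex.exp (c * s))
      (Complex.exp (c * t) * (1 - t)) t := by
    intro t _
    have h1 : HasDerivAt (fun s : ℝ => ((1 : ℂ) - s)) (-1) t := by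
      simpa using ((hasDerivAt_id t).ofReal_comp.const_sub (1:ℂ))
    have h2 := hasDerivAt_cexp_mul c t
    have := (((h1.const_mul (1/c)).mul h2).add (h2.const_mul (1/c^2)))
    convert this using 1
    · rfl
    · rfl
    field_simp
    ring
  have hint : IntervalIntegrable (fun t : ℝ => Complex.exp (c * t) * (1 - t)) volume 0 1 := by
    apply Continuous.intervalIntegrable; fun_prop
  rw [intervalIntegral.integral_eq_sub_of_hasDerivAt key hint]
  push_cast
  field_simp
  simp only [mul_zero, Complex.exp_zero]; ring
lemma part2 (c : ℂ) (hc : c ≠ 0) :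
    ∫ t in (-1:ℝ)..0, Complex.exp (c * t) * (1 + t) =
      (1 / c - 1 / c ^ 2) + Complex.exp (-c) / c ^ 2 := by
  have key : ∀ t ∈ Set.uIcc (-1:ℝ) 0, HasDerivAt
      (fun s : ℝ => (1/c) * (1 + s) * Complex.exp (c * s) - (1/c^2) * Complex.exp (c * s))
      (Complex.exp (c * t) * (1 + t)) t := by
    intro t _
    have h1 : HasDerivAt (fun s : ℝ => ((1 : ℂ) + s)) 1 t := by
      simpa using ((hasDerivAt_id t).ofReal_comp.const_add (1:ℂ))
    have h2 := hasDerivAt_cexp_mul c t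
    have := (((h1.const_mul (1/c)).mul h2).sub (h2.const_mul (1/c^2)))
    convert this using 1
    · rfl
    · rfl
    field_simp
    ring
  have hint : IntervalIntegrable (fun t : ℝ => Complex.exp (c * t) * (1 + t)) volume (-1) 0 := by
    apply Continuous.intervalIntegrable; fun_prop
  rw [intervalIntegral.integral_eq_sub_of_hasDerivAt key hint]
  push_cast
  rw [show c * (-1 : ℂ) = -c by ring]
  field_simp
  simp only [Complex.ofReal_zero, mul_zero, Complex.exp_zero]; ring

lemma real_trig_id (x : ℝ) : 2 - 2 * Real.cos (2 * x) = 4 * Real.sin x ^ 2 := by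
  rw [Real.cos_two_mul]
  nlinarith [Real.sin_sq_add_cos_sq x]

lemma hexp_real (x : ℝ) : Complex.exp ((x:ℂ) * Complex.I) =
    ((Real.cos x : ℝ) : ℂ) + ((Real.sin x : ℝ) : ℂ) * Complex.I := by
  rw [Complex.exp_mul_I, Complex.ofReal_cos, Complex.ofReal_sin]

lemma collapse (c X Y : ℂ) (hc : c ≠ 0) :
    (1/c - 1/c^2 + Y/c^2) + (X / c^2 - (1/c + 1/c^2)) = (X + Y - 2)/c^2 := by
  have h2 : c^2 ≠ 0 := pow_ne_zero 2 hc
  rw [eq_div_iff h2]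
  field_simp
  ring

lemma ft_triFn (u : ℝ) : 𝓕 triFn u =
    ∫ t in (-1:ℝ)..1, Complex.exp ((((-2)*π*u : ℝ) : ℂ) * Complex.I * t) * ((1 - |t| : ℝ) : ℂ) := by
  rw [Real.fourier_real_eq_integral_exp_smul]
  have h : ∀ v : ℝ, Complex.exp (↑(-2 * π * v * u) * Complex.I) • triFn v =
      Set.indicator (Set.Icc (-1:ℝ) 1)
        (fun t => Complex.exp ((((-2)*π*u : ℝ) : ℂ) * Complex.I * t) * ((1 - |t| : ℝ) : ℂ)) v := by
    intro v
    unfold triFn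
    by_cases hv : |v| ≤ 1
    · rw [Set.indicator_of_mem (by rwa [Set.mem_Icc, ← abs_le]), if_pos hv, smul_eq_mul]
      congr 2
      push_cast
      ring
    · rw [Set.indicator_of_notMem (by rwa [Set.mem_Icc, ← abs_le]), if_neg hv, smul_zero]
  simp_rw [h]
  rw [MeasureTheory.integral_indicator measurableSet_Icc,
    MeasureTheory.integral_Icc_eq_integral_Ioc,
    ← intervalIntegral.integral_of_le (by norm_num : (-1:ℝ) ≤ 1)]

lemma ft_triFn_ne (u : ℝ) (hu : u ≠ 0) :
    𝓕 triFn u = ((Real.sin (π*u)^2 / (π*u)^2 : ℝ) : ℂ) := by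
  have hπ : (0:ℝ) < π := Real.pi_pos
  set a : ℝ := 2*π*u with ha
  have haa : a ≠ 0 := by
    simp only [ha]
    positivity
  set C : ℂ := ((-2)*π*u : ℝ) * Complex.I with hC
  have hCa : C = ((-a : ℝ) : ℂ) * Complex.I := by rw [hC, ha]; push_cast; ring
  have hCne : C ≠ 0 := by
    rw [hCa]
    simp [Complex.I_ne_zero, haa]
  have hC2 : C^2 = ((-(a^2) : ℝ) : ℂ) := by
    rw [hCa, mul_pow, Complex.I_sq]
    push_cast
    ring
  rw [ft_triFn]
  rw [← intervalIntegral.integral_add_adjacent_intervals (b := (0:ℝ))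
    (by apply Continuous.intervalIntegrable; fun_prop)
    (by apply Continuous.intervalIntegrable; fun_prop)]
  have e1 : (∫ t in (0:ℝ)..1, Complex.exp (C * t) * ((1 - |t| : ℝ) : ℂ)) =
      ∫ t in (0:ℝ)..1, Complex.exp (C * t) * (1 - t) := by
    apply intervalIntegral.integral_congr
    intro t ht
    rw [Set.uIcc_of_le (by norm_num)] at ht
    show Complex.exp (C * t) * ((1 - |t| : ℝ) : ℂ) = Complex.exp (C * t) * (1 - (t:ℂ))
    rw [_root_.abs_of_nonneg ht.1]
    push_cast
    ring
  have e2 : (∫ t in (-1:ℝ)..0, Complex.exp (C * t) * ((1 - |t| : ℝ) : ℂ)) =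
      ∫ t in (-1:ℝ)..0, Complex.exp (C * t) * (1 + t) := by
    apply intervalIntegral.integral_congr
    intro t ht
    rw [Set.uIcc_of_le (by norm_num)] at ht
    show Complex.exp (C * t) * ((1 - |t| : ℝ) : ℂ) = Complex.exp (C * t) * (1 + (t:ℂ))
    rw [_root_.abs_of_nonpos ht.2]
    push_cast
    ring
  rw [e1, e2, part1 C hCne, part2 C hCne]
  rw [collapse C _ _ hCne]
  have h1 : Complex.exp C = ((Real.cos a : ℝ) : ℂ) - ((Real.sin a : ℝ) : ℂ) * Complex.I := by
    rw [hCa, show ((-a : ℝ) : ℂ) = (((-a : ℝ) : ℝ) : ℂ) from rfl, hexp_real (-a)]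
    push_cast [Real.cos_neg, Real.sin_neg]
    ring
  have h2 : Complex.exp (-C) = ((Real.cos a : ℝ) : ℂ) + ((Real.sin a : ℝ) : ℂ) * Complex.I := by
    rw [show -C = ((a : ℝ) : ℂ) * Complex.I by rw [hCa]; push_cast; ring, hexp_real a]
  rw [h1, h2, hC2]
  have h3 : (((Real.cos a : ℝ) : ℂ) - ((Real.sin a : ℝ) : ℂ) * Complex.I)
      + (((Real.cos a : ℝ) : ℂ) + ((Real.sin a : ℝ) : ℂ) * Complex.I) - 2
      = ((2 * Real.cos a - 2 : ℝ) : ℂ) := by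
    push_cast
    ring
  rw [h3, ← Complex.ofReal_div, Complex.ofReal_inj]
  have hπu : π * u ≠ 0 := mul_ne_zero hπ.ne' hu
  have hid := real_trig_id (π * u)
  have haπu : a = 2 * (π * u) := by rw [ha]; ring
  rw [show (2 * Real.cos a - 2) / -a ^ 2 = (2 - 2 * Real.cos a) / a ^ 2 by ring, haπu]
  rw [div_eq_div_iff (by positivity) (by positivity)]
  nlinarith [hid, sq_nonneg (π*u)]

lemma ft_triFn_zero : 𝓕 triFn 0 = 1 := by
  rw [ft_triFn]
  have h : ∀ t ∈ Set.uIcc (-1:ℝ) 1,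
      Complex.exp ((((-2)*π*(0:ℝ) : ℝ) : ℂ) * Complex.I * t) * ((1 - |t| : ℝ) : ℂ)
      = ((1 - |t| : ℝ) : ℂ) := by
    intro t _
    norm_num
  rw [intervalIntegral.integral_congr h, intervalIntegral.integral_ofReal]
  have : (∫ t in (-1:ℝ)..1, (1 - |t|)) = 1 := by
    rw [← intervalIntegral.integral_add_adjacent_intervals (b := (0:ℝ))
      (by apply Continuous.intervalIntegrable; fun_prop)
      (by apply Continuous.intervalIntegrable; fun_prop)]
    have e1 : (∫ t in (-1:ℝ)..0, (1 - |t|)) = ∫ t in (-1:ℝ)..0, (1 + t) := by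
      apply intervalIntegral.integral_congr
      intro t ht
      rw [Set.uIcc_of_le (by norm_num)] at ht
      show 1 - |t| = 1 + t
      rw [_root_.abs_of_nonpos ht.2]
      ring
    have e2 : (∫ t in (0:ℝ)..1, (1 - |t|)) = ∫ t in (0:ℝ)..1, (1 - t) := by
      apply intervalIntegral.integral_congr
      intro t ht
      rw [Set.uIcc_of_le (by norm_num)] at ht
      show 1 - |t| = 1 - t
      rw [_root_.abs_of_nonneg ht.1]
    rw [e1, e2]
    rw [intervalIntegral.integral_add intervalIntegrable_const intervalIntegral.intervalIntegrable_id,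
      intervalIntegral.integral_sub intervalIntegrable_const intervalIntegral.intervalIntegrable_id]
    simp [integral_id]
    norm_num
  rw [this]
  norm_num

noncomputable def fejer (u : ℝ) : ℝ :=
  if u = 0 then 1 else Real.sin (Real.pi * u) ^ 2 / (Real.pi * u) ^ 2

lemma ft_eq_fejer (u : ℝ) : 𝓕 triFn u = ((fejer u : ℝ) : ℂ) := by
  unfold fejer
  split_ifs with h
  · rw [h, ft_triFn_zero]; norm_num
  · exact ft_triFn_ne u h

lemma fejer_nonneg (u : ℝ) : 0 ≤ fejer u := by
  unfold fejer; split_ifs with h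
  · norm_num
  · positivity

lemma fejer_le_one (u : ℝ) : fejer u ≤ 1 := by
  unfold fejer; split_ifs with h
  · exact le_refl 1
  · have h2 : (0:ℝ) < (π * u)^2 := by
      have := Real.pi_pos
      positivity
    rw [div_le_one h2]
    exact Real.sin_sq_le_sq

lemma fejer_le_inv_sq (u : ℝ) (hu : u ≠ 0) : fejer u ≤ (u ^ 2)⁻¹ := by
  unfold fejer
  rw [if_neg hu]
  have hπ : (1:ℝ) ≤ π := by linarith [Real.pi_gt_three]
  have h2 : (0:ℝ) < (π*u)^2 := by positivity
  have h1 : Real.sin (π*u)^2 ≤ 1 := by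
    nlinarith [Real.neg_one_le_sin (π*u), Real.sin_le_one (π*u)]
  rw [div_le_iff₀ h2]
  have h3 : (u^2)⁻¹ * (π*u)^2 = π^2 := by field_simp
  rw [h3]
  nlinarith

lemma fejer_measurable : Measurable fejer := by
  unfold fejer
  exact Measurable.ite (measurableSet_singleton 0) measurable_const (by fun_prop)

lemma fejer_le_bound (u : ℝ) : fejer u ≤ 2 * (1 + u^2)⁻¹ := by
  have h1 : (0:ℝ) < 1 + u^2 := by positivity
  by_cases h : u^2 ≤ 1
  · calc fejer u ≤ 1 := fejer_le_one u
      _ ≤ 2 * (1 + u^2)⁻¹ := by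
        rw [le_mul_inv_iff₀ h1]
        linarith
  · push_neg at h
    have hu : u ≠ 0 := by intro h0; rw [h0] at h; norm_num at h
    calc fejer u ≤ (u^2)⁻¹ := fejer_le_inv_sq u hu
      _ ≤ 2 * (1 + u^2)⁻¹ := by
        rw [show 2 * (1+u^2)⁻¹ = 2/(1+u^2) by ring, inv_eq_one_div,
          div_le_div_iff₀ (by positivity) h1]
        nlinarith

lemma fejer_integrable : Integrable fejer := by
  apply Integrable.mono' (g := fun u => 2 * (1 + u^2)⁻¹)
    (integrable_inv_one_add_sq.const_mul 2) fejer_measurable.aestronglyMeasurable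
  filter_upwards with u
  rw [Real.norm_eq_abs, _root_.abs_of_nonneg (fejer_nonneg u)]
  exact fejer_le_bound u

lemma fejer_mass : ∫ u : ℝ, fejer u = 1 := by
  have hFT : 𝓕 triFn = fun u => ((fejer u : ℝ) : ℂ) := funext ft_eq_fejer
  have hFTint : Integrable (𝓕 triFn) := by
    rw [hFT]
    exact fejer_integrable.ofReal
  have hinv := MeasureTheory.Integrable.fourierInv_fourier_eq triFn_integrable hFTint (v := 0) triFn_continuous.continuousAt
  have hT0 : triFn 0 = 1 := by unfold triFn; norm_num
  rw [hT0] at hinv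
  rw [Real.fourierInv_eq] at hinv
  simp only [inner_zero_right, AddChar.map_zero_eq_one, one_smul] at hinv
  rw [hFT] at hinv
  rw [show (∫ (v : ℝ), (fun u => ((fejer u : ℝ) : ℂ)) v) = ((∫ v : ℝ, fejer v : ℝ) : ℂ)
    from _root_.integral_ofReal] at hinv
  exact_mod_cast hinv

lemma triangleFT_eq_fejer (u : ℝ) : triangleFT u = fejer u := by
  have h : (∫ t : ℝ, Complex.exp (-(2 * Real.pi * t * u) * Complex.I) *
      (if |t| ≤ 1 then ((1 - |t| : ℝ) : ℂ) else 0)) = 𝓕 triFn u := by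
    rw [Real.fourier_real_eq_integral_exp_smul]
    congr 1
    funext t
    rw [smul_eq_mul]
    unfold triFn
    congr 2
    push_cast
    ring
  unfold triangleFT
  rw [h, ft_eq_fejer]
  simp

lemma smoothK_eq (δ u : ℝ) : smoothK δ u = δ⁻¹ * fejer (u / δ) := by
  unfold smoothK
  rw [triangleFT_eq_fejer]

lemma smoothK_nonneg {δ : ℝ} (hδ : 0 < δ) (u : ℝ) : 0 ≤ smoothK δ u := by
  rw [smoothK_eq]
  exact mul_nonneg (by positivity) (fejer_nonneg _)

lemma smoothK_le {δ : ℝ} (hδ : 0 < δ) (u : ℝ) : smoothK δ u ≤ δ⁻¹ := by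
  rw [smoothK_eq]
  calc δ⁻¹ * fejer (u/δ) ≤ δ⁻¹ * 1 :=
        mul_le_mul_of_nonneg_left (fejer_le_one _) (by positivity)
    _ = δ⁻¹ := mul_one _

lemma smoothK_fun_eq (δ : ℝ) : smoothK δ = fun u => δ⁻¹ * fejer (u / δ) :=
  funext (smoothK_eq δ)

lemma smoothK_measurable (δ : ℝ) : Measurable (smoothK δ) := by
  rw [smoothK_fun_eq]
  exact (fejer_measurable.comp (measurable_id.div_const δ)).const_mul _

lemma smoothK_integrable {δ : ℝ} (hδ : 0 < δ) : Integrable (smoothK δ) := by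
  rw [smoothK_fun_eq]
  exact (fejer_integrable.comp_div hδ.ne').const_mul _

lemma smoothK_mass {δ : ℝ} (hδ : 0 < δ) : ∫ v : ℝ, smoothK δ v = 1 := by
  simp_rw [smoothK_eq]
  rw [MeasureTheory.integral_const_mul, MeasureTheory.Measure.integral_comp_div, fejer_mass]
  rw [smul_eq_mul, abs_of_pos hδ]
  field_simp

lemma invsq_intOn_Ioi {ε : ℝ} (hε : 0 < ε) :
    IntegrableOn (fun v : ℝ => (v^2)⁻¹) (Set.Ioi ε) := by
  have h := integrableOn_Ioi_rpow_of_lt (by norm_num : (-2:ℝ) < -1) hε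
  apply h.congr_fun ?_ measurableSet_Ioi
  intro x hx
  have hx0 : (0:ℝ) < x := hε.trans hx
  show x ^ (-2:ℝ) = (x^2)⁻¹
  rw [Real.rpow_neg hx0.le, ← Real.rpow_natCast x 2]
  norm_num

lemma invsq_int_Ioi {ε : ℝ} (hε : 0 < ε) :
    ∫ v in Set.Ioi ε, (v^2)⁻¹ = ε⁻¹ := by
  have h := integral_Ioi_rpow_of_lt (by norm_num : (-2:ℝ) < -1) hε
  have e : ∀ x ∈ Set.Ioi ε, (x:ℝ) ^ (-2:ℝ) = (x^2)⁻¹ := by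
    intro x hx
    have hx0 : (0:ℝ) < x := hε.trans hx
    rw [Real.rpow_neg hx0.le, ← Real.rpow_natCast x 2]
    norm_num
  rw [setIntegral_congr_fun measurableSet_Ioi e] at h
  rw [h, show (-2:ℝ) + 1 = -1 by norm_num, Real.rpow_neg_one]
  field_simp

lemma invsq_intOn_Iio {ε : ℝ} (hε : 0 < ε) :
    IntegrableOn (fun v : ℝ => (v^2)⁻¹) (Set.Iio (-ε)) := by
  have h1 : IntegrableOn (fun v : ℝ => ((-v)^2)⁻¹) (Set.Ioi ε) := by
    simpa [neg_sq] using invsq_intOn_Ioi hε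
  have h2 := (MeasurePreserving.integrableOn_comp_preimage
    (Measure.measurePreserving_neg (volume : Measure ℝ))
    (Homeomorph.neg ℝ).measurableEmbedding).2 h1
  have hset : (fun x : ℝ => -x) ⁻¹' (Set.Ioi ε) = Set.Iio (-ε) := by
    ext x
    simp [lt_neg]
  rw [hset] at h2
  apply h2.congr_fun ?_ measurableSet_Iio
  intro x _
  simp [neg_sq]

lemma invsq_int_Iio {ε : ℝ} (hε : 0 < ε) :
    ∫ v in Set.Iio (-ε), (v^2)⁻¹ = ε⁻¹ := by
  rw [← MeasureTheory.integral_Iic_eq_integral_Iio]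
  have h := integral_comp_neg_Iic (-ε) (fun v : ℝ => (v^2)⁻¹)
  simp only [neg_sq, neg_neg] at h
  rw [h, invsq_int_Ioi hε]

lemma abs_set_eq (ε : ℝ) : {v : ℝ | ε < |v|} = Set.Iio (-ε) ∪ Set.Ioi ε := by
  ext v
  simp only [Set.mem_setOf_eq, Set.mem_union, Set.mem_Iio, Set.mem_Ioi, lt_abs]
  constructor
  · rintro (h | h)
    · right; exact h
    · left; linarith
  · rintro (h | h)
    · right; linarith
    · left; exact h

lemma abs_set_meas (ε : ℝ) : MeasurableSet {v : ℝ | ε < |v|} := by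
  rw [abs_set_eq]
  exact measurableSet_Iio.union measurableSet_Ioi

lemma smoothK_tail {ε : ℝ} (hε : 0 < ε) :
    ∫ v in {v : ℝ | ε < |v|}, smoothK (ε^2) v ≤ 2 * ε := by
  have hδ : (0:ℝ) < ε^2 := by positivity
  have hdisj : Disjoint (Set.Iio (-ε)) (Set.Ioi ε) := by
    apply Set.disjoint_left.mpr
    intro v hv1 hv2
    simp only [Set.mem_Iio] at hv1
    simp only [Set.mem_Ioi] at hv2
    linarith
  have hmajIio : IntegrableOn (fun v : ℝ => ε^2 * (v^2)⁻¹) (Set.Iio (-ε)) :=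
    (invsq_intOn_Iio hε).const_mul _
  have hmajIoi : IntegrableOn (fun v : ℝ => ε^2 * (v^2)⁻¹) (Set.Ioi ε) :=
    (invsq_intOn_Ioi hε).const_mul _
  have hmajInt : IntegrableOn (fun v : ℝ => ε^2 * (v^2)⁻¹) {v : ℝ | ε < |v|} := by
    rw [abs_set_eq]
    exact hmajIio.union hmajIoi
  have hpt : ∀ v ∈ {v : ℝ | ε < |v|}, smoothK (ε^2) v ≤ ε^2 * (v^2)⁻¹ := by
    intro v hv
    simp only [Set.mem_setOf_eq] at hv
    have hv0 : v ≠ 0 := by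
      intro h0
      rw [h0, abs_zero] at hv
      linarith
    rw [smoothK_eq]
    have h := fejer_le_inv_sq (v/(ε^2)) (div_ne_zero hv0 hδ.ne')
    calc (ε^2)⁻¹ * fejer (v/(ε^2)) ≤ (ε^2)⁻¹ * ((v/(ε^2))^2)⁻¹ :=
          mul_le_mul_of_nonneg_left h (by positivity)
      _ = ε^2 * (v^2)⁻¹ := by
          field_simp
  calc ∫ v in {v : ℝ | ε < |v|}, smoothK (ε^2) v
      ≤ ∫ v in {v : ℝ | ε < |v|}, ε^2 * (v^2)⁻¹ :=
        setIntegral_mono_on ((smoothK_integrable hδ).integrableOn) hmajInt (abs_set_meas ε) hpt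
    _ = (∫ v in Set.Iio (-ε), ε^2 * (v^2)⁻¹) + ∫ v in Set.Ioi ε, ε^2 * (v^2)⁻¹ := by
        rw [abs_set_eq]
        exact setIntegral_union hdisj measurableSet_Ioi hmajIio hmajIoi
    _ = ε^2 * ε⁻¹ + ε^2 * ε⁻¹ := by
        rw [MeasureTheory.integral_const_mul, MeasureTheory.integral_const_mul,
          invsq_int_Iio hε, invsq_int_Ioi hε]
    _ = 2 * ε := by
        field_simp
        ring

/-- If `f ≤_ε g` (ε-domination) for non-negative integrable `f, g`, then
`f(u) ≤ (1-2ε)⁻¹ (g * ρ_{ε²})(u)` and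
`g(u) ≥ (f * ρ_{ε²})(u) - ∫_{|v|>ε} f(u-v) ρ_{ε²}(v) dv`. -/
theorem statement9 (ε : ℝ) (hε : 0 < ε) (hε4 : ε < 1 / 4) (f g : ℝ → ℝ)
    (hf0 : ∀ t, 0 ≤ f t) (hg0 : ∀ t, 0 ≤ g t)
    (hfint : Integrable f) (hgint : Integrable g)
    (hdom : ∀ t v : ℝ, |v| ≤ ε → f t ≤ g (t + v)) :
    ∀ u : ℝ,
      f u ≤ (1 - 2 * ε)⁻¹ * (∫ v : ℝ, g (u - v) * smoothK (ε ^ 2) v) ∧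
      (∫ v : ℝ, f (u - v) * smoothK (ε ^ 2) v) -
          (∫ v in {v : ℝ | ε < |v|}, f (u - v) * smoothK (ε ^ 2) v) ≤ g u := by
  intro u
  have hδ : (0:ℝ) < ε^2 := by positivity
  have hSmeas := abs_set_meas ε
  have hScompl : {v : ℝ | ε < |v|}ᶜ = {v : ℝ | |v| ≤ ε} := by
    ext v
    simp [not_lt]
  have hKint := smoothK_integrable hδ
  have hKnn := smoothK_nonneg hδ
  have hKmass := smoothK_mass hδ
  have hKbdd : ∃ C, ∀ v : ℝ, ‖smoothK (ε^2) v‖ ≤ C := by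
    refine ⟨(ε^2)⁻¹, fun v => ?_⟩
    rw [Real.norm_eq_abs, _root_.abs_of_nonneg (hKnn v)]
    exact smoothK_le hδ v
  have hprod : ∀ h : ℝ → ℝ, Integrable h →
      Integrable (fun v => h (u - v) * smoothK (ε^2) v) := by
    intro h hint
    have h1 : Integrable (fun v => h (u - v)) := hint.comp_sub_left u
    have h2 := Integrable.bdd_mul h1
      (smoothK_measurable (ε^2)).aestronglyMeasurable (Filter.Eventually.of_forall hKbdd.choose_spec)
    apply h2.congr
    filter_upwards with v
    ring
  have hgprod := hprod g hgint
  have hfprod := hprod f hfint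
  -- mass inside |v| ≤ ε
  have hmass_in : 1 - 2*ε ≤ ∫ v in {v : ℝ | ε < |v|}ᶜ, smoothK (ε^2) v := by
    have := MeasureTheory.integral_add_compl hSmeas hKint
    have htail := smoothK_tail hε
    rw [hKmass] at this
    linarith
  have hmass_le : ∫ v in {v : ℝ | ε < |v|}ᶜ, smoothK (ε^2) v ≤ 1 := by
    rw [← hKmass]
    apply setIntegral_le_integral hKint
    filter_upwards with v using hKnn v
  constructor
  · -- part 1
    have h1 : ∫ v in {v : ℝ | ε < |v|}ᶜ, f u * smoothK (ε^2) v ≤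
        ∫ v in {v : ℝ | ε < |v|}ᶜ, g (u - v) * smoothK (ε^2) v := by
      apply setIntegral_mono_on ((hKint.const_mul (f u)).integrableOn)
        hgprod.integrableOn hSmeas.compl
      intro v hv
      rw [hScompl] at hv
      simp only [Set.mem_setOf_eq] at hv
      have hd := hdom u (-v) (by rwa [abs_neg])
      rw [show u + -v = u - v by ring] at hd
      exact mul_le_mul_of_nonneg_right hd (hKnn v)
    have h2 : ∫ v in {v : ℝ | ε < |v|}ᶜ, g (u - v) * smoothK (ε^2) v ≤
        ∫ v, g (u - v) * smoothK (ε^2) v := by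
      apply setIntegral_le_integral hgprod
      filter_upwards with v using mul_nonneg (hg0 _) (hKnn v)
    have h3 : (1 - 2*ε) * f u ≤ f u * ∫ v in {v : ℝ | ε < |v|}ᶜ, smoothK (ε^2) v := by
      rw [mul_comm]
      exact mul_le_mul_of_nonneg_left hmass_in (hf0 u)
    rw [← MeasureTheory.integral_const_mul] at h3
    have hpos : (0:ℝ) < 1 - 2*ε := by linarith
    rw [le_inv_mul_iff₀ hpos]
    calc (1 - 2*ε) * f u ≤ _ := h3
      _ ≤ _ := h1
      _ ≤ _ := h2
  · -- part 2
    have hsplit := MeasureTheory.integral_add_compl hSmeas hfprod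
    have h1 : ∫ v in {v : ℝ | ε < |v|}ᶜ, f (u - v) * smoothK (ε^2) v ≤
        ∫ v in {v : ℝ | ε < |v|}ᶜ, g u * smoothK (ε^2) v := by
      apply setIntegral_mono_on hfprod.integrableOn
        ((hKint.const_mul (g u)).integrableOn) hSmeas.compl
      intro v hv
      rw [hScompl] at hv
      simp only [Set.mem_setOf_eq] at hv
      have hd := hdom (u - v) v hv
      rw [show u - v + v = u by ring] at hd
      exact mul_le_mul_of_nonneg_right hd (hKnn v)
    have h2 : ∫ v in {v : ℝ | ε < |v|}ᶜ, g u * smoothK (ε^2) v ≤ g u := by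
      rw [MeasureTheory.integral_const_mul]
      calc g u * ∫ v in {v : ℝ | ε < |v|}ᶜ, smoothK (ε^2) v ≤ g u * 1 :=
            mul_le_mul_of_nonneg_left hmass_le (hg0 u)
        _ = g u := mul_one _
    linarith
end

section
/- Let (V_n)_{n≥1} be a sequence of non-decreasing functions on ℝ such that for every continuous compactly supported φ : ℝ → ℝ, the sequence ∫_ℝ V_n(t) φ(t) dt has a finite limit. Then there exists a unique right-continuous non-decreasing function V on ℝ such that for all such φ, lim_{n→∞} ∫_ℝ V_n(t) φ(t) dt = ∫_ℝ V(t) φ(t) dt. -/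
open MeasureTheory Filter
open Set Metric



/-- A nonneg continuous bump with compact support in `[a,b]`, positive integral,
and integral bounds against monotone functions. -/
lemma bump_spec {a b : ℝ} (hab : a < b) :
    ∃ φ : ℝ → ℝ, Continuous φ ∧ HasCompactSupport φ ∧ (0 < ∫ t, φ t) ∧
      ∀ f : ℝ → ℝ, Monotone f →
        f a * ∫ t, φ t ≤ (∫ t, f t * φ t) ∧ (∫ t, f t * φ t) ≤ f b * ∫ t, φ t := by
  have h1 : (0:ℝ) < (b - a) / 4 := by linarith
  have h2 : (b - a) / 4 < (b - a) / 2 := by linarith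
  let g : ContDiffBump ((a + b) / 2) := ⟨(b - a) / 4, (b - a) / 2, h1, h2⟩
  have hts : tsupport (⇑g) = Set.Icc a b := by
    rw [g.tsupport_eq]
    show closedBall ((a+b)/2) ((b-a)/2) = Set.Icc a b
    rw [Real.closedBall_eq_Icc]
    congr 1 <;> ring
  refine ⟨⇑g, g.continuous, g.hasCompactSupport, g.integral_pos, ?_⟩
  intro f hf
  have hint : Integrable (fun t => f t * g t) := by
    simpa [smul_eq_mul] using
      (hf.locallyIntegrable).integrable_smul_right_of_hasCompactSupport g.continuous
        g.hasCompactSupport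
  have hintc : ∀ c : ℝ, Integrable (fun t => c * g t) := fun c =>
    (g.continuous.integrable_of_hasCompactSupport g.hasCompactSupport).const_mul c
  constructor
  · rw [show f a * ∫ t, g t = ∫ t, f a * g t by rw [MeasureTheory.integral_const_mul]]
    refine integral_mono (hintc _) hint (fun t => ?_)
    by_cases ht : t ∈ tsupport (⇑g)
    · rw [hts] at ht
      exact mul_le_mul_of_nonneg_right (hf ht.1) (g.nonneg)
    · simp [image_eq_zero_of_notMem_tsupport ht]
  · rw [show f b * ∫ t, g t = ∫ t, f b * g t by rw [MeasureTheory.integral_const_mul]]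
    refine integral_mono hint (hintc _) (fun t => ?_)
    by_cases ht : t ∈ tsupport (⇑g)
    · rw [hts] at ht
      exact mul_le_mul_of_nonneg_right (hf ht.2) (g.nonneg)
    · simp [image_eq_zero_of_notMem_tsupport ht]

section main
variable (V : ℕ → ℝ → ℝ) (hmono : ∀ n, Monotone (V n))
  (hconv : ∀ φ : ℝ → ℝ, Continuous φ → HasCompactSupport φ →
      ∃ L : ℝ, Tendsto (fun n => ∫ t : ℝ, V n t * φ t) atTop (nhds L))

include hmono hconv

/-- pointwise upper bound uniform in n -/
lemma pt_ub (x : ℝ) : ∃ C : ℝ, ∀ n, V n x ≤ C := by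
  obtain ⟨φ, hφc, hφs, hφpos, hφb⟩ := bump_spec (show x < x + 1 by linarith)
  obtain ⟨L, hL⟩ := hconv φ hφc hφs
  obtain ⟨M, hM⟩ := hL.bddAbove_range
  refine ⟨M / ∫ t, φ t, fun n => ?_⟩
  have h1 := (hφb (V n) (hmono n)).1
  have h2 : (∫ t, V n t * φ t) ≤ M := hM ⟨n, rfl⟩
  rw [le_div_iff₀ hφpos]
  linarith

lemma pt_lb (x : ℝ) : ∃ C : ℝ, ∀ n, C ≤ V n x := by
  obtain ⟨φ, hφc, hφs, hφpos, hφb⟩ := bump_spec (show x - 1 < x by linarith)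
  obtain ⟨L, hL⟩ := hconv φ hφc hφs
  obtain ⟨M, hM⟩ := hL.bddBelow_range
  refine ⟨M / ∫ t, φ t, fun n => ?_⟩
  have h1 := (hφb (V n) (hmono n)).2
  have h2 : M ≤ (∫ t, V n t * φ t) := hM ⟨n, rfl⟩
  rw [div_le_iff₀ hφpos]
  linarith

lemma bddV (x : ℝ) : IsBoundedUnder (· ≤ ·) atTop (fun n => V n x) ∧
    IsBoundedUnder (· ≥ ·) atTop (fun n => V n x) := by
  obtain ⟨C, hC⟩ := pt_ub V hmono hconv x
  obtain ⟨c, hc⟩ := pt_lb V hmono hconv x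
  exact ⟨isBoundedUnder_of ⟨C, hC⟩, isBoundedUnder_of ⟨c, hc⟩⟩

/-- the key chain inequality -/
lemma chain {a b : ℝ} (hab : a < b) :
    limsup (fun n => V n a) atTop ≤ liminf (fun n => V n b) atTop := by
  obtain ⟨φ, hφc, hφs, hφpos, hφb⟩ := bump_spec hab
  obtain ⟨L, hL⟩ := hconv φ hφc hφs
  have hLdiv : Tendsto (fun n => (∫ t, V n t * φ t) / ∫ t, φ t) atTop
      (nhds (L / ∫ t, φ t)) := hL.div_const _
  have h1 : limsup (fun n => V n a) atTop ≤ L / ∫ t, φ t := by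
    rw [← hLdiv.limsup_eq]
    obtain ⟨M, hM⟩ := hLdiv.bddAbove_range
    refine limsup_le_limsup (Eventually.of_forall fun n => ?_)
      ((bddV V hmono hconv a).2.isCoboundedUnder_le)
      (isBoundedUnder_of ⟨M, fun n => hM ⟨n, rfl⟩⟩)
    rw [le_div_iff₀ hφpos]
    exact (hφb (V n) (hmono n)).1
  have h2 : L / ∫ t, φ t ≤ liminf (fun n => V n b) atTop := by
    rw [← hLdiv.liminf_eq]
    obtain ⟨M, hM⟩ := hLdiv.bddBelow_range
    refine liminf_le_liminf (Eventually.of_forall fun n => ?_)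
      (isBoundedUnder_of ⟨M, fun n => hM ⟨n, rfl⟩⟩)
      ((bddV V hmono hconv b).1.isCoboundedUnder_ge)
    rw [div_le_iff₀ hφpos]
    exact (hφb (V n) (hmono n)).2
  exact h1.trans h2
end main

section main2
variable (V : ℕ → ℝ → ℝ) (hmono : ∀ n, Monotone (V n))
  (hconv : ∀ φ : ℝ → ℝ, Continuous φ → HasCompactSupport φ →
      ∃ L : ℝ, Tendsto (fun n => ∫ t : ℝ, V n t * φ t) atTop (nhds L))

include hmono hconv

lemma umono : Monotone (fun x => limsup (fun n => V n x) atTop) := by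
  intro a b hab
  rcases eq_or_lt_of_le hab with rfl | h
  · exact le_rfl
  · exact (chain V hmono hconv h).trans
      (liminf_le_limsup (bddV V hmono hconv b).1 (bddV V hmono hconv b).2)

lemma pt_tendsto (x : ℝ)
    (hc : ContinuousAt (fun x => limsup (fun n => V n x) atTop) x) :
    Tendsto (fun n => V n x) atTop (nhds (limsup (fun n => V n x) atTop)) := by
  set u : ℝ → ℝ := fun x => limsup (fun n => V n x) atTop with hu
  refine tendsto_of_le_liminf_of_limsup_le ?_ le_rfl
    (bddV V hmono hconv x).1 (bddV V hmono hconv x).2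
  -- u x ≤ liminf
  rw [Metric.continuousAt_iff] at hc
  refine le_of_forall_pos_le_add fun ε hε => ?_
  obtain ⟨δ, hδ, hδ'⟩ := hc ε hε
  have h1 : u (x - δ/2) ≤ liminf (fun n => V n x) atTop :=
    chain V hmono hconv (by linarith)
  have h2 : dist (u (x - δ/2)) (u x) < ε := hδ' (by
    rw [Real.dist_eq, abs_of_nonpos (by linarith)]; linarith)
  rw [Real.dist_eq, abs_lt] at h2
  linarith
end main2

section main3
variable (V : ℕ → ℝ → ℝ) (hmono : ∀ n, Monotone (V n))
  (hconv : ∀ φ : ℝ → ℝ, Continuous φ → HasCompactSupport φ →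
      ∃ L : ℝ, Tendsto (fun n => ∫ t : ℝ, V n t * φ t) atTop (nhds L))

include hmono hconv

lemma ae_tendsto_W :
    ∀ᵐ x : ℝ, Tendsto (fun n => V n x) atTop
      (nhds ((umono V hmono hconv).stieltjesFunction x)) := by
  set u : ℝ → ℝ := fun x => limsup (fun n => V n x) atTop with hu
  have hcount : Set.Countable {x | ¬ContinuousAt u x} :=
    (umono V hmono hconv).countable_not_continuousAt
  have hae : ∀ᵐ x : ℝ, ContinuousAt u x := by
    rw [MeasureTheory.ae_iff]
    exact hcount.measure_zero _
  filter_upwards [hae] with x hx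
  have hWx : (umono V hmono hconv).stieltjesFunction x = u x := by
    rw [(umono V hmono hconv).stieltjesFunction_eq x]
    exact rightLim_eq_of_tendsto (h := nhdsGT_neBot x)
      (hx.tendsto.mono_left nhdsWithin_le_nhds)
  rw [hWx]
  exact pt_tendsto V hmono hconv x hx

end main3

section main4
variable (V : ℕ → ℝ → ℝ) (hmono : ∀ n, Monotone (V n))
  (hconv : ∀ φ : ℝ → ℝ, Continuous φ → HasCompactSupport φ →
      ∃ L : ℝ, Tendsto (fun n => ∫ t : ℝ, V n t * φ t) atTop (nhds L))

include hmono hconv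

lemma conv_W (φ : ℝ → ℝ) (hφc : Continuous φ) (hφs : HasCompactSupport φ) :
    Tendsto (fun n => ∫ t : ℝ, V n t * φ t) atTop
      (nhds (∫ t : ℝ, (umono V hmono hconv).stieltjesFunction t * φ t)) := by
  obtain ⟨R, hR⟩ := hφs.isBounded.subset_closedBall 0
  set a : ℝ := -(|R| + 1)
  set b : ℝ := |R| + 1
  have hsupp : tsupport φ ⊆ Set.Icc a b := by
    refine hR.trans ?_
    rw [Real.closedBall_eq_Icc]
    apply Set.Icc_subset_Icc
    · simp only [a, zero_sub]
      linarith [le_abs_self R, neg_abs_le R]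
    · simp only [b, zero_add]
      linarith [le_abs_self R, neg_abs_le R]
  obtain ⟨M, hM⟩ := hφs.exists_bound_of_continuousOn hφc.continuousOn
  set Mb : ℝ := max M 0
  have hMb : ∀ t, |φ t| ≤ Mb := by
    intro t
    by_cases ht : t ∈ tsupport φ
    · exact (hM t ht).trans (le_max_left _ _)
    · simp [image_eq_zero_of_notMem_tsupport ht, Mb]
  obtain ⟨Cb, hCb⟩ := pt_ub V hmono hconv b
  obtain ⟨ca, hca⟩ := pt_lb V hmono hconv a
  set D : ℝ := max (max Cb (-ca)) 0
  have hD : ∀ n, ∀ t ∈ Set.Icc a b, |V n t| ≤ D := by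
    intro n t ht
    rw [abs_le]
    constructor
    · have : ca ≤ V n t := (hca n).trans (hmono n ht.1)
      have h2 : -ca ≤ D := le_max_of_le_left (le_max_right _ _)
      linarith
    · exact ((hmono n ht.2).trans (hCb n)).trans (le_max_of_le_left (le_max_left _ _))
  refine tendsto_integral_of_dominated_convergence
    (Set.indicator (Set.Icc a b) fun _ => D * Mb) ?_ ?_ ?_ ?_
  · exact fun n => ((hmono n).measurable.mul hφc.measurable).aestronglyMeasurable
  · rw [integrable_indicator_iff measurableSet_Icc]
    exact integrableOn_const measure_Icc_lt_top.ne
  · intro n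
    refine Eventually.of_forall fun t => ?_
    by_cases ht : t ∈ Set.Icc a b
    · rw [Set.indicator_of_mem ht]
      calc ‖V n t * φ t‖ = |V n t| * |φ t| := abs_mul _ _
      _ ≤ D * Mb := mul_le_mul (hD n t ht) (hMb t) (abs_nonneg _)
          (le_max_right _ _)
    · rw [Set.indicator_of_notMem ht]
      have : φ t = 0 := image_eq_zero_of_notMem_tsupport (fun h => ht (hsupp h))
      simp [this]
  · filter_upwards [ae_tendsto_W V hmono hconv] with t ht
    exact ht.mul_const (φ t)

end main4

lemma eq_of_right_cont_ae_eq {W W' : ℝ → ℝ}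
    (hW : ∀ t : ℝ, ContinuousWithinAt W (Set.Ici t) t)
    (hW' : ∀ t : ℝ, ContinuousWithinAt W' (Set.Ici t) t)
    (h : W =ᵐ[volume] W') : W = W' := by
  funext x
  set S : Set ℝ := {y | W y = W' y} with hS
  have hSc : volume {y | ¬ W y = W' y} = 0 := h
  have hsub : S ∩ Set.Ioi x ⊆ Set.Ici x := fun y hy => Set.mem_Ici.2 (le_of_lt hy.2)
  have hne : (nhdsWithin x (S ∩ Set.Ioi x)).NeBot := by
    rw [← mem_closure_iff_nhdsWithin_neBot, Metric.mem_closure_iff]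
    intro ε hε
    have hpos : volume (Set.Ioo x (x + ε)) ≠ 0 := by
      rw [Real.volume_Ioo]
      simp only [ne_eq, ENNReal.ofReal_eq_zero, not_le]
      linarith
    have hnonempty : (S ∩ Set.Ioo x (x + ε)).Nonempty := by
      by_contra hempty
      rw [Set.not_nonempty_iff_eq_empty] at hempty
      apply hpos
      refine measure_mono_null (fun y hy => ?_) hSc
      intro hWy
      exact Set.eq_empty_iff_forall_notMem.1 hempty y ⟨hWy, hy⟩
    obtain ⟨y, hyS, hyI⟩ := hnonempty
    refine ⟨y, ⟨hyS, hyI.1⟩, ?_⟩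
    rw [Real.dist_eq, abs_of_nonpos (by linarith [hyI.1, hyI.2])]
    linarith [hyI.1, hyI.2]
  have h1 : Tendsto W (nhdsWithin x (S ∩ Set.Ioi x)) (nhds (W x)) :=
    (hW x).mono_left (nhdsWithin_mono x hsub)
  have h2 : Tendsto W' (nhdsWithin x (S ∩ Set.Ioi x)) (nhds (W' x)) :=
    (hW' x).mono_left (nhdsWithin_mono x hsub)
  have heq : W =ᶠ[nhdsWithin x (S ∩ Set.Ioi x)] W' :=
    eventually_of_mem self_mem_nhdsWithin fun y hy => hy.1
  exact tendsto_nhds_unique h1 (h2.congr' heq.symm)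

/-- If `(V_n)` is a sequence of non-decreasing functions on `ℝ` whose integrals against every
continuous compactly supported test function converge, then there is a unique right-continuous
non-decreasing function `V` with `∫ V_n φ → ∫ V φ` for all such test functions. -/
theorem statement13 (V : ℕ → ℝ → ℝ) (hmono : ∀ n, Monotone (V n))
    (hconv : ∀ φ : ℝ → ℝ, Continuous φ → HasCompactSupport φ →
      ∃ L : ℝ, Tendsto (fun n => ∫ t : ℝ, V n t * φ t) atTop (nhds L)) :
    ∃! W : ℝ → ℝ,
      (Monotone W ∧ ∀ t : ℝ, ContinuousWithinAt W (Set.Ici t) t) ∧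
        ∀ φ : ℝ → ℝ, Continuous φ → HasCompactSupport φ →
          Tendsto (fun n => ∫ t : ℝ, V n t * φ t) atTop (nhds (∫ t : ℝ, W t * φ t)) := by
  set W := (umono V hmono hconv).stieltjesFunction with hWdef
  refine ⟨⇑W, ⟨⟨W.mono, W.right_continuous⟩, fun φ hφc hφs => conv_W V hmono hconv φ hφc hφs⟩, ?_⟩
  rintro W' ⟨⟨hm', hrc'⟩, hcv'⟩
  refine eq_of_right_cont_ae_eq hrc' W.right_continuous ?_
  refine ae_eq_of_integral_contDiff_smul_eq hm'.locallyIntegrable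
    W.mono.locallyIntegrable fun g hg hgs => ?_
  have hgc := hg.continuous
  have e1 : (∫ x, g x • W' x) = ∫ t : ℝ, W' t * g t := by
    simp only [smul_eq_mul, mul_comm]
  have e2 : (∫ x, g x • W x) = ∫ t : ℝ, W t * g t := by
    simp only [smul_eq_mul, mul_comm]
  rw [e1, e2]
  exact tendsto_nhds_unique (hcv' g hgc hgs) (conv_W V hmono hconv g hgc hgs)
end

section
/- Let g be Hölder continuous on X with ν(g) = 0, not a coboundary, and suppose a function V̌^g(z,·) has been defined for each z ∈ X⁺ as the weak limit of t ↦ ∫_{X⁻_z}(t+Š_n g(y·z)) 1{τ̌_t^g(y·z)>n} ν⁻_z(dy). Then for every z ∈ X⁺ and t ∈ ℝ, V̌^{g∘T^{-1}}(z,t) = L_ψ( V̌^g(·,t) )(z) = Σ_{Tz'=z} e^{−ψ(z')} V̌^g(z',t). -/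
open MeasureTheory

variable {A : Type*}

/-- The two-sided shift map. -/
def shiftZ : (ℤ → A) → ℤ → A := fun x n => x (n + 1)

/-- The two-sided subshift of finite type. -/
def XSet (M : A → A → Bool) : Set (ℤ → A) := {x | ∀ n : ℤ, M (x n) (x (n + 1)) = true}

/-- The reversed Birkhoff sums `Š_n g(x) = ∑_{k=1}^n g(T^{-k} x)`. -/
noncomputable def revSumZ (g : (ℤ → A) → ℝ) (n : ℕ) (x : ℤ → A) : ℝ :=
  ∑ k ∈ Finset.range n, g (shiftZinv^[k + 1] x)

/-- Survival event: `τ̌_t^g(x) > n`. -/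
def survZ (g : (ℤ → A) → ℝ) (t : ℝ) (n : ℕ) (x : ℤ → A) : Prop :=
  ∀ k : ℕ, 1 ≤ k → k ≤ n → 0 ≤ t + revSumZ g k x

/-- Two-sided Hölder continuity. -/
def HolderWithZ (S : Set (ℤ → A)) (C α : ℝ) (f : (ℤ → A) → ℝ) : Prop :=
  ∀ x ∈ S, ∀ y ∈ S, ∀ k : ℕ, (∀ j : ℤ, |j| < (k : ℤ) → x j = y j) → |f x - f y| ≤ C * α ^ k

def IsHolderZ (S : Set (ℤ → A)) (f : (ℤ → A) → ℝ) : Prop :=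
  ∃ C α : ℝ, 0 < C ∧ 0 < α ∧ α < 1 ∧ HolderWithZ S C α f

def IsCoboundaryZ (S : Set (ℤ → A)) (f : (ℤ → A) → ℝ) : Prop :=
  ∃ g, IsHolderZ S g ∧ ∀ x ∈ S, f x = g (shiftZ x) - g x

/-- `W` is the harmonic function `V̌^g` of the observable `g`: for each `z ∈ X⁺`,
`W(z,·)` is the weak limit of `t ↦ ∫ (t + Š_n g(y·z)) 1{τ̌_t^g(y·z) > n} ν⁻_z(dy)`. -/
def IsHarmonicLimit [MeasurableSpace A] (M : A → A → Bool)
    (νm : (ℕ → A) → Measure (ℕ → A)) (g : (ℤ → A) → ℝ) (W : (ℕ → A) → ℝ → ℝ) : Prop :=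
  ∀ z ∈ XplusSet M,
    (Monotone (W z) ∧ ∀ t : ℝ, ContinuousWithinAt (W z) (Set.Ici t) t) ∧
    ∀ φ : ℝ → ℝ, Continuous φ → HasCompactSupport φ →
      Filter.Tendsto
        (fun n => ∫ t : ℝ, φ t *
          ∫ y, Set.indicator {y' | survZ g t n (concat y' z)}
            (fun y' => t + revSumZ g n (concat y' z)) y ∂νm z)
        Filter.atTop (nhds (∫ t : ℝ, φ t * W z t))


section Aux18

open Filter Topology

namespace Stmt18

variable {A : Type*}

lemma measurableSet_all [MeasurableSpace A] [MeasurableSingletonClass A] [Finite A]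
    (s : Set A) : MeasurableSet s := s.toFinite.measurableSet

variable [MeasurableSpace A] [MeasurableSingletonClass A]

lemma measurable_consN (a : A) : Measurable (consN a : (ℕ → A) → ℕ → A) := by
  apply measurable_pi_lambda
  intro n
  rcases n with _ | n
  · simpa [consN] using measurable_const
  · simpa [consN] using measurable_pi_apply n

lemma measurable_shiftN : Measurable (shiftN : (ℕ → A) → ℕ → A) :=
  measurable_pi_lambda _ fun n => measurable_pi_apply (n + 1)

lemma measurable_shiftZinv : Measurable (shiftZinv : (ℤ → A) → ℤ → A) :=
  measurable_pi_lambda _ fun n => measurable_pi_apply (n - 1)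

lemma measurable_concat (z : ℕ → A) : Measurable (fun y => concat y z : (ℕ → A) → ℤ → A) := by
  apply measurable_pi_lambda
  intro n
  by_cases h : 0 ≤ n
  · simpa [concat, h] using measurable_const
  · simpa [concat, h] using measurable_pi_apply _

lemma shiftN_consN (a : A) (y : ℕ → A) : shiftN (consN a y) = y := by
  funext n; simp [shiftN, consN]

lemma consN_zero (a : A) (y : ℕ → A) : consN a y 0 = a := rfl

lemma shiftZinv_concat (y z : ℕ → A) :
    shiftZinv (concat y z) = concat (shiftN y) (consN (y 0) z) := by
  funext n
  simp only [shiftZinv, concat, shiftN, consN]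
  rcases lt_trichotomy n 0 with h | h | h
  · have h1 : ¬ (0 ≤ n - 1) := by omega
    have h2 : ¬ (0 ≤ n) := by omega
    simp only [if_neg h1, if_neg h2]
    congr 1
    omega
  · subst h
    norm_num
  · have h1 : 0 ≤ n - 1 := by omega
    have h2 : 0 ≤ n := by omega
    simp only [if_pos h1, if_pos h2]
    have h3 : n.toNat ≠ 0 := by omega
    rw [if_neg h3]
    congr 1
    omega

set_option linter.unusedSectionVars false
set_option linter.unnecessarySimpa false

lemma shiftN_iterate (k : ℕ) (w : ℕ → A) : shiftN^[k] w = fun n => w (n + k) := by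
  induction k with
  | zero => simp
  | succ k ih =>
    rw [Function.iterate_succ_apply', ih]
    funext n
    simp only [shiftN]
    congr 1
    omega

lemma cons_mem_XplusSet {M : A → A → Bool} {a : A} {z : ℕ → A}
    (ha : M a (z 0) = true) (hz : z ∈ XplusSet M) : consN a z ∈ XplusSet M := by
  intro n
  rcases n with _ | n
  · simpa [consN] using ha
  · simpa [consN] using hz n

/-- tail of a word -/
def btail {k : ℕ} (b : Fin (k + 1) → A) : Fin k → A := fun i => b i.succ

lemma wordConcat_btail {k : ℕ} (b : Fin (k + 1) → A) (z : ℕ → A) :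
    wordConcat (btail b) (consN (b 0) z) = wordConcat b z := by
  funext n
  simp only [wordConcat, btail, consN]
  rcases lt_trichotomy n k with h | h | h
  · rw [dif_pos h, dif_pos (by omega : n < k + 1)]
    congr 1
    apply Fin.ext
    simp only [Fin.succ]
    omega
  · subst h
    rw [dif_neg (lt_irrefl _), dif_pos (by omega : n < n + 1)]
    have h0 : (⟨n + 1 - 1 - n, by omega⟩ : Fin (n + 1)) = 0 := by
      apply Fin.ext; simp
    rw [h0]
    simp
  · rw [dif_neg (by omega), dif_neg (by omega)]
    rw [if_neg (by omega : ¬ (n - k = 0))]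
    congr 1

lemma shiftN_iterate_wordConcat {k : ℕ} (b : Fin (k + 1) → A) (z : ℕ → A) :
    shiftN^[k] (wordConcat b z) = consN (b 0) z := by
  rw [shiftN_iterate]
  funext n
  simp only [wordConcat, consN]
  rcases n with _ | n
  · rw [dif_pos (by omega : 0 + k < k + 1), if_pos rfl]
    congr 1
    apply Fin.ext
    simp
  · rw [dif_neg (by omega), if_neg (by omega : ¬ (n + 1 = 0))]
    congr 1
    omega

lemma birkhoffN_succ' (ψ : (ℕ → A) → ℝ) (k : ℕ) (w : ℕ → A) :
    birkhoffN ψ (k + 1) w = birkhoffN ψ k w + ψ (shiftN^[k] w) :=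
  Finset.sum_range_succ _ _

lemma wordCompat_succ_iff {M : A → A → Bool} {k : ℕ} (b : Fin (k + 1) → A) (z : ℕ → A) :
    wordCompat M b z ↔ (M (b 0) (z 0) = true ∧ wordCompat M (btail b) (consN (b 0) z)) := by
  constructor
  · rintro ⟨h1, h2⟩
    refine ⟨by simpa using h1 (by omega), ?_, ?_⟩
    · intro hk
      have := h2 0 (by omega)
      simpa [btail, consN, Fin.succ] using this
    · intro i hi
      have := h2 (i + 1) (by omega)
      simpa [btail, Fin.succ] using this
  · rintro ⟨h1, h2, h3⟩
    constructor
    · intro _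
      simpa using h1
    · intro i hi
      rcases i with _ | i
      · have := h2 (by omega)
        simpa [btail, consN, Fin.succ] using this
      · have := h3 i (by omega)
        simpa [btail, Fin.succ] using this

lemma consN_mem_pastCyl_iff {k : ℕ} (a : A) (y : ℕ → A) (b : Fin (k + 1) → A) :
    consN a y ∈ pastCyl b ↔ (a = b 0 ∧ y ∈ pastCyl (btail b)) := by
  constructor
  · intro h
    refine ⟨by simpa [consN] using h 0, fun i => ?_⟩
    have := h i.succ
    simpa [consN, btail, Fin.succ] using this
  · rintro ⟨h0, h⟩
    intro i
    rcases i with ⟨_ | i, hi⟩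
    · simpa [consN] using h0
    · have := h ⟨i, by omega⟩
      simpa [consN, btail, Fin.succ] using this

lemma pastCyl_zero (b : Fin 0 → A) : pastCyl b = Set.univ := by
  ext y; simp [pastCyl]

lemma measurableSet_pastCyl [Finite A] {k : ℕ} (b : Fin k → A) :
    MeasurableSet (pastCyl b) := by
  have : pastCyl b = ⋂ i : Fin k, (fun y : ℕ → A => y i) ⁻¹' {b i} := by
    ext y; simp [pastCyl]
  rw [this]
  exact MeasurableSet.iInter fun i => (measurable_pi_apply _) (measurableSet_all _)

lemma concat_mem_XSet {M : A → A → Bool} {y z : ℕ → A}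
    (hy : pastCompat M y z) (hz : z ∈ XplusSet M) : concat y z ∈ XSet M := by
  intro n
  rcases lt_trichotomy n (-1) with h | h | h
  · have h1 : ¬ (0 ≤ n) := by omega
    have h2 : ¬ (0 ≤ n + 1) := by omega
    simp only [concat, if_neg h1, if_neg h2]
    have : (-(n + 1)).toNat = (-(n + 1 + 1)).toNat + 1 := by omega
    rw [this]
    exact hy.2 _
  · subst h
    simpa [concat] using hy.1
  · have h1 : 0 ≤ n := by omega
    have h2 : 0 ≤ n + 1 := by omega
    simp only [concat, if_pos h1, if_pos h2]
    have h3 : (n + 1).toNat = n.toNat + 1 := by omega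
    rw [h3]
    exact hz n.toNat

lemma shiftZinv_mem_XSet {M : A → A → Bool} {x : ℤ → A} (hx : x ∈ XSet M) :
    shiftZinv x ∈ XSet M := by
  intro n
  have := hx (n - 1)
  simpa [shiftZinv] using this

lemma shiftZinv_iterate_mem_XSet {M : A → A → Bool} {x : ℤ → A} (hx : x ∈ XSet M) (k : ℕ) :
    shiftZinv^[k] x ∈ XSet M := by
  induction k with
  | zero => simpa using hx
  | succ k ih => rw [Function.iterate_succ_apply']; exact shiftZinv_mem_XSet ih

lemma revSumZ_congr {M : A → A → Bool} {g G : (ℤ → A) → ℝ}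
    (hGg : ∀ x ∈ XSet M, G x = g x) {x : ℤ → A} (hx : x ∈ XSet M) (n : ℕ) :
    revSumZ G n x = revSumZ g n x := by
  refine Finset.sum_congr rfl fun k _ => ?_
  exact hGg _ (shiftZinv_iterate_mem_XSet hx (k + 1))

lemma revSumZ_comp_shiftZinv (g : (ℤ → A) → ℝ) (n : ℕ) (x : ℤ → A) :
    revSumZ (fun x' => g (shiftZinv x')) n x = revSumZ g n (shiftZinv x) := by
  refine Finset.sum_congr rfl fun k _ => ?_
  simp only []
  congr 1
  rw [← Function.iterate_succ_apply' shiftZinv (k+1) x, Function.iterate_succ_apply]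

lemma survZ_comp_shiftZinv (g : (ℤ → A) → ℝ) (t : ℝ) (n : ℕ) (x : ℤ → A) :
    survZ (fun x' => g (shiftZinv x')) t n x ↔ survZ g t n (shiftZinv x) := by
  have h : ∀ k, revSumZ (fun x' => g (shiftZinv x')) k x = revSumZ g k (shiftZinv x) :=
    fun k => revSumZ_comp_shiftZinv g k x
  simp only [survZ, h]

lemma survZ_congr {M : A → A → Bool} {g G : (ℤ → A) → ℝ}
    (hGg : ∀ x ∈ XSet M, G x = g x) {x : ℤ → A} (hx : x ∈ XSet M) (t : ℝ) (n : ℕ) :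
    (survZ G t n x ↔ survZ g t n x) := by
  unfold survZ
  constructor <;> intro h k h1 h2 <;> have := h k h1 h2
  · rwa [revSumZ_congr hGg hx] at this
  · rwa [revSumZ_congr hGg hx]

section Topo

variable [Fintype A] [TopologicalSpace A] [DiscreteTopology A]

lemma borelSpaceA : BorelSpace A := by
  constructor
  refine MeasurableSpace.ext fun s => ⟨fun _ => ?_, fun _ => (s.toFinite).measurableSet⟩
  exact MeasurableSpace.measurableSet_generateFrom (isOpen_discrete s)

lemma isClosed_XSet (M : A → A → Bool) : IsClosed (XSet M) := by
  have h : XSet M = ⋂ n : ℤ, (fun x : ℤ → A => (x n, x (n + 1))) ⁻¹' {p | M p.1 p.2 = true} := by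
    ext x; simp [XSet, Set.mem_iInter]
  rw [h]
  exact isClosed_iInter fun n =>
    (isClosed_discrete _).preimage ((continuous_apply n).prodMk (continuous_apply (n + 1)))

lemma continuousOn_of_holderZ {M : A → A → Bool} {g : (ℤ → A) → ℝ} {C α : ℝ}
    (hC : 0 < C) (hα0 : 0 < α) (hα1 : α < 1) (h : HolderWithZ (XSet M) C α g) :
    ContinuousOn g (XSet M) := by
  intro x hx
  rw [ContinuousWithinAt, Metric.tendsto_nhds]
  intro ε hε
  obtain ⟨k, hk⟩ : ∃ k : ℕ, C * α ^ k < ε := by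
    have := Filter.Tendsto.const_mul C (tendsto_pow_atTop_nhds_zero_of_lt_one hα0.le hα1)
    rw [mul_zero] at this
    rcases (this.eventually (eventually_lt_nhds hε)).exists with ⟨k, hk⟩
    exact ⟨k, hk⟩
  have hUopen : IsOpen {y : ℤ → A | ∀ j ∈ Finset.Ioo (-(k : ℤ)) (k : ℤ), y j = x j} := by
    have : {y : ℤ → A | ∀ j ∈ Finset.Ioo (-(k : ℤ)) (k : ℤ), y j = x j} =
        ⋂ j ∈ (Finset.Ioo (-(k : ℤ)) (k : ℤ) : Finset ℤ), (fun y : ℤ → A => y j) ⁻¹' {x j} := by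
      ext y; simp [Set.mem_iInter]
    rw [this]
    exact isOpen_biInter_finset fun j _ => (continuous_apply j).isOpen_preimage _ (isOpen_discrete _)
  have hmem : {y : ℤ → A | ∀ j ∈ Finset.Ioo (-(k : ℤ)) (k : ℤ), y j = x j} ∈ nhdsWithin x (XSet M) :=
    mem_nhdsWithin_of_mem_nhds (hUopen.mem_nhds (fun j _ => rfl))
  filter_upwards [hmem, self_mem_nhdsWithin] with y hy hyX
  rw [Real.dist_eq]
  calc |g y - g x| ≤ C * α ^ k := by
        refine h y hyX x hx k fun j hj => ?_
        exact hy j (by rw [Finset.mem_Ioo]; exact abs_lt.mp hj)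
    _ < ε := hk

lemma exists_measurable_version (M : A → A → Bool) {g : (ℤ → A) → ℝ}
    (hg : IsHolderZ (XSet M) g) (hne : (XSet M).Nonempty) :
    ∃ (G : (ℤ → A) → ℝ) (B : ℝ), 0 ≤ B ∧ Measurable G ∧ (∀ x ∈ XSet M, G x = g x) ∧
      ∀ x, |G x| ≤ B := by
  haveI := borelSpaceA (A := A)
  obtain ⟨C, α, hC, hα0, hα1, hH⟩ := hg
  obtain ⟨x₀, hx₀⟩ := hne
  classical
  refine ⟨fun x => if h : x ∈ XSet M then g x else 0, |g x₀| + C, by positivity, ?_, ?_, ?_⟩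
  · have hcont : ContinuousOn g (XSet M) := continuousOn_of_holderZ hC hα0 hα1 hH
    have hmeas : Measurable ((XSet M).restrict g) :=
      (continuousOn_iff_continuous_restrict.mp hcont).measurable
    exact Measurable.dite hmeas measurable_const (isClosed_XSet M).measurableSet
  · intro x hx; simp [hx]
  · intro x
    by_cases hx : x ∈ XSet M
    · simp only [dif_pos hx]
      have := hH x hx x₀ hx₀ 0 (by intro j hj; have := abs_nonneg j; omega)
      rw [pow_zero, mul_one] at this
      calc |g x| ≤ |g x - g x₀| + |g x₀| := by
              have := abs_add_le (g x - g x₀) (g x₀); simpa using this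
        _ ≤ |g x₀| + C := by linarith
    · simp only [dif_neg hx, abs_zero]; positivity

end Topo

section Decomp

variable (A) in
/-- cylinders in the space of pasts -/
def Cyl : Set (Set (ℕ → A)) := {S | ∃ (k : ℕ) (a : Fin k → A), S = pastCyl a}

variable [Fintype A] [DecidableEq A]

lemma pi_eq_generateFrom_cyl :
    (inferInstance : MeasurableSpace (ℕ → A)) = MeasurableSpace.generateFrom (Cyl A) := by
  refine le_antisymm ?_ (MeasurableSpace.generateFrom_le ?_)
  · refine iSup_le fun n => ?_
    intro s hs
    obtain ⟨t, -, rfl⟩ := hs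
    have hrep : (fun y : ℕ → A => y n) ⁻¹' t =
        ⋃ (b : Fin (n + 1) → A) (_ : b ⟨n, n.lt_succ_self⟩ ∈ t), pastCyl b := by
      ext y
      simp only [Set.mem_preimage, Set.mem_iUnion, pastCyl, Set.mem_setOf_eq]
      constructor
      · intro hy
        exact ⟨fun i => y i, by simpa using hy, fun i => rfl⟩
      · rintro ⟨b, hb, hyb⟩
        have h := hyb ⟨n, n.lt_succ_self⟩
        simp only at h
        rw [h]
        exact hb
    rw [hrep]
    exact MeasurableSet.iUnion fun b => MeasurableSet.iUnion fun hb =>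
      MeasurableSpace.measurableSet_generateFrom ⟨_, b, rfl⟩
  · rintro S ⟨k, a, rfl⟩
    exact measurableSet_pastCyl a

lemma isPiSystem_cyl : IsPiSystem (Cyl A) := by
  have key : ∀ (k m : ℕ) (a : Fin k → A) (b : Fin m → A), k ≤ m →
      (pastCyl a ∩ pastCyl b).Nonempty → pastCyl a ∩ pastCyl b = pastCyl b := by
    rintro k m a b hkm ⟨y, hya, hyb⟩
    apply Set.inter_eq_self_of_subset_right
    intro w hw i
    have h1 : a i = b ⟨i.1, lt_of_lt_of_le i.2 hkm⟩ := by
      rw [← hya i]; exact hyb ⟨i.1, lt_of_lt_of_le i.2 hkm⟩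
    rw [h1]; exact hw ⟨i.1, lt_of_lt_of_le i.2 hkm⟩
  rintro S ⟨k, a, rfl⟩ T ⟨m, b, rfl⟩ hne
  rcases le_total k m with h | h
  · rw [key k m a b h hne]; exact ⟨m, b, rfl⟩
  · rw [Set.inter_comm] at hne ⊢
    rw [key m k b a h hne]
    exact ⟨k, a, rfl⟩

lemma nu_univ [MeasurableSpace A] [MeasurableSingletonClass A] {M : A → A → Bool}
    {ψ : (ℕ → A) → ℝ} {νm : (ℕ → A) → Measure (ℕ → A)} (hνm : IsCondGibbs M ψ νm)
    {z : ℕ → A} (hz : z ∈ XplusSet M) : νm z Set.univ = 1 := by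
  have h := (hνm z hz 0 (Fin.elim0)).1
    ⟨fun h => absurd h (lt_irrefl 0), fun i hi => absurd hi (by omega)⟩
  rw [pastCyl_zero] at h
  simpa [birkhoffN] using h

lemma measure_decomp [MeasurableSpace A] [MeasurableSingletonClass A] {M : A → A → Bool}
    {ψ : (ℕ → A) → ℝ} {νm : (ℕ → A) → Measure (ℕ → A)}
    (hνm : IsCondGibbs M ψ νm)
    (hnorm : ∀ z ∈ XplusSet M, transfer M ψ (fun _ => (1 : ℝ)) z = 1)
    {z : ℕ → A} (hz : z ∈ XplusSet M) :
    νm z = ∑ a ∈ Finset.univ.filter (fun a => M a (z 0) = true),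
      (ENNReal.ofReal (Real.exp (-ψ (consN a z)))) • Measure.map (consN a) (νm (consN a z)) := by
  classical
  haveI : IsFiniteMeasure (νm z) := ⟨by rw [nu_univ hνm hz]; exact ENNReal.one_lt_top⟩
  have hRHS : ∀ (s : Set (ℕ → A)), MeasurableSet s →
      (∑ a ∈ Finset.univ.filter (fun a => M a (z 0) = true),
        (ENNReal.ofReal (Real.exp (-ψ (consN a z)))) • Measure.map (consN a) (νm (consN a z))) s
      = ∑ a ∈ Finset.univ.filter (fun a => M a (z 0) = true),
        ENNReal.ofReal (Real.exp (-ψ (consN a z))) * (νm (consN a z)) (consN a ⁻¹' s) := by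
    intro s hs
    rw [Measure.coe_finset_sum, Finset.sum_apply]
    refine Finset.sum_congr rfl fun a ha => ?_
    rw [Measure.smul_apply, Measure.map_apply (measurable_consN a) hs, smul_eq_mul]
  have huniv : ∑ a ∈ Finset.univ.filter (fun a => M a (z 0) = true),
      ENNReal.ofReal (Real.exp (-ψ (consN a z))) * (νm (consN a z)) Set.univ = 1 := by
    have h1 : ∀ a ∈ Finset.univ.filter (fun a => M a (z 0) = true),
        ENNReal.ofReal (Real.exp (-ψ (consN a z))) * (νm (consN a z)) Set.univ
        = ENNReal.ofReal (Real.exp (-ψ (consN a z))) := by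
      intro a ha
      rw [nu_univ hνm (cons_mem_XplusSet (by simpa using ha) hz), mul_one]
    rw [Finset.sum_congr rfl h1,
      ← ENNReal.ofReal_sum_of_nonneg (fun a _ => (Real.exp_pos _).le)]
    have h2 := hnorm z hz
    simp only [transfer, mul_one] at h2
    rw [h2, ENNReal.ofReal_one]
  refine ext_of_generate_finite (Cyl A) pi_eq_generateFrom_cyl isPiSystem_cyl ?_ ?_
  · rintro S ⟨k, b, rfl⟩
    rw [hRHS _ (measurableSet_pastCyl b)]
    rcases k with _ | k
    · rw [pastCyl_zero b]
      simp only [Set.preimage_univ]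
      rw [nu_univ hνm hz, huniv]
    · have hpre : ∀ a : A, consN a ⁻¹' pastCyl b = if a = b 0 then pastCyl (btail b) else ∅ := by
        intro a
        ext y
        by_cases h : a = b 0 <;>
          simp [Set.mem_preimage, consN_mem_pastCyl_iff, h]
      by_cases hb : wordCompat M b z
      · have hc0 : M (b 0) (z 0) = true := ((wordCompat_succ_iff b z).1 hb).1
        have hct : wordCompat M (btail b) (consN (b 0) z) := ((wordCompat_succ_iff b z).1 hb).2
        rw [(hνm z hz (k + 1) b).1 hb]
        rw [Finset.sum_eq_single (b 0)]
        · rw [hpre (b 0), if_pos rfl,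
            ((hνm (consN (b 0) z) (cons_mem_XplusSet hc0 hz) k (btail b)).1 hct),
            wordConcat_btail]
          rw [← ENNReal.ofReal_mul (by positivity), ← Real.exp_add]
          rw [birkhoffN_succ', shiftN_iterate_wordConcat]
          congr 2
          ring
        · intro a ha hne
          rw [hpre a, if_neg hne, measure_empty, mul_zero]
        · intro h
          exact absurd (by simp [hc0] : b 0 ∈ Finset.univ.filter (fun a => M a (z 0) = true)) h
      · rw [(hνm z hz (k + 1) b).2 hb]
        refine (Finset.sum_eq_zero fun a ha => ?_).symm
        rw [hpre a]
        by_cases h : a = b 0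
        · rw [if_pos h]
          have hc0 : M (b 0) (z 0) = true := by
            rw [← h]; simpa using ha
          have hct : ¬ wordCompat M (btail b) (consN (b 0) z) := by
            intro hc
            exact hb ((wordCompat_succ_iff b z).2 ⟨hc0, hc⟩)
          rw [h, (hνm (consN (b 0) z) (cons_mem_XplusSet hc0 hz) k (btail b)).2 hct, mul_zero]
        · rw [if_neg h, measure_empty, mul_zero]
  · rw [hRHS _ MeasurableSet.univ]
    simp only [Set.preimage_univ]
    rw [nu_univ hνm hz, huniv]

end Decomp

section AE

variable [Fintype A] [DecidableEq A] [MeasurableSpace A] [MeasurableSingletonClass A]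

lemma ae_pastCompat {M : A → A → Bool} {ψ : (ℕ → A) → ℝ} {νm : (ℕ → A) → Measure (ℕ → A)}
    (hνm : IsCondGibbs M ψ νm) {z : ℕ → A} (hz : z ∈ XplusSet M) :
    ∀ᵐ y ∂νm z, pastCompat M y z := by
  rw [MeasureTheory.ae_iff]
  have hsub : {y : ℕ → A | ¬ pastCompat M y z} ⊆
      {y : ℕ → A | ¬ M (y 0) (z 0) = true} ∪ ⋃ k : ℕ, {y | ¬ M (y (k + 1)) (y k) = true} := by
    intro y hy
    simp only [pastCompat, not_and, not_forall] at hy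
    by_cases h0 : M (y 0) (z 0) = true
    · rcases hy h0 with ⟨k, hk⟩
      exact Or.inr (Set.mem_iUnion.mpr ⟨k, hk⟩)
    · exact Or.inl h0
  refine measure_mono_null hsub (measure_union_null ?_ (measure_iUnion_null fun k => ?_))
  · have hsub2 : {y : ℕ → A | ¬ M (y 0) (z 0) = true} ⊆
        ⋃ (a : A) (_ : ¬ M a (z 0) = true), pastCyl (fun _ : Fin 1 => a) := by
      intro y hy
      refine Set.mem_iUnion.mpr ⟨y 0, Set.mem_iUnion.mpr ⟨hy, fun i => ?_⟩⟩
      have h : (i : ℕ) = 0 := Nat.lt_one_iff.mp i.isLt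
      rw [h]
    refine measure_mono_null hsub2 (measure_iUnion_null fun a => ?_)
    by_cases ha : M a (z 0) = true
    · simp [ha]
    · rw [Set.iUnion_eq_if, if_pos ha]
      refine (hνm z hz 1 (fun _ => a)).2 ?_
      intro ⟨h1, _⟩
      exact ha (by simpa using h1 one_pos)
  · have hsub2 : {y : ℕ → A | ¬ M (y (k + 1)) (y k) = true} ⊆
        ⋃ (b : Fin (k + 2) → A) (_ : ¬ M (b ⟨k + 1, by omega⟩) (b ⟨k, by omega⟩) = true),
          pastCyl b := by
      intro y hy
      exact Set.mem_iUnion.mpr ⟨fun i => y i, Set.mem_iUnion.mpr ⟨hy, fun i => rfl⟩⟩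
    refine measure_mono_null hsub2 (measure_iUnion_null fun b => ?_)
    by_cases hb : M (b ⟨k + 1, by omega⟩) (b ⟨k, by omega⟩) = true
    · simp [hb]
    · rw [Set.iUnion_eq_if, if_pos hb]
      refine (hνm z hz (k + 2) b).2 ?_
      intro ⟨_, h2⟩
      exact hb (h2 k (by omega))

end AE

section Jsec

variable [Fintype A] [DecidableEq A] [MeasurableSpace A] [MeasurableSingletonClass A]

open Classical in
/-- measurable surrogate integrand -/
noncomputable def Jf (G : (ℤ → A) → ℝ) (t : ℝ) (n : ℕ) (x : ℤ → A) : ℝ :=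
  Set.indicator {x' : ℤ → A | survZ G t n x'} (fun x' => t + revSumZ G n x') x

lemma measurable_revSumZ {G : (ℤ → A) → ℝ} (hG : Measurable G) (n : ℕ) :
    Measurable (revSumZ G n) := by
  unfold revSumZ
  exact Finset.measurable_sum _ fun k _ => hG.comp (measurable_shiftZinv.iterate (k + 1))

lemma measurableSet_survZ {G : (ℤ → A) → ℝ} (hG : Measurable G) (t : ℝ) (n : ℕ) :
    MeasurableSet {x : ℤ → A | survZ G t n x} := by
  have hrep : {x : ℤ → A | survZ G t n x} =
      ⋂ k ∈ Finset.Icc 1 n, {x : ℤ → A | 0 ≤ t + revSumZ G k x} := by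
    ext x
    simp only [survZ, Set.mem_iInter, Set.mem_setOf_eq, Finset.mem_Icc]
    constructor
    · intro h k hk; exact h k hk.1 hk.2
    · intro h k h1 h2; exact h k ⟨h1, h2⟩
  rw [hrep]
  exact MeasurableSet.biInter (Finset.Icc 1 n).countable_toSet fun k _ =>
    measurableSet_le measurable_const (measurable_const.add (measurable_revSumZ hG k))

lemma measurable_Jf {G : (ℤ → A) → ℝ} (hG : Measurable G) (t : ℝ) (n : ℕ) :
    Measurable (Jf G t n) :=
  (measurable_const.add (measurable_revSumZ hG n)).indicator (measurableSet_survZ hG t n)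

lemma abs_revSumZ_le {G : (ℤ → A) → ℝ} {B : ℝ} (hB : ∀ x, |G x| ≤ B) (n : ℕ) (x : ℤ → A) :
    |revSumZ G n x| ≤ n * B := by
  calc |revSumZ G n x| ≤ ∑ k ∈ Finset.range n, |G (shiftZinv^[k + 1] x)| :=
        Finset.abs_sum_le_sum_abs _ _
    _ ≤ ∑ k ∈ Finset.range n, B := Finset.sum_le_sum fun k _ => hB _
    _ = n * B := by simp [mul_comm]

lemma abs_Jf_le {G : (ℤ → A) → ℝ} {B : ℝ} (hB0 : 0 ≤ B) (hB : ∀ x, |G x| ≤ B)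
    (t : ℝ) (n : ℕ) (x : ℤ → A) : |Jf G t n x| ≤ |t| + n * B := by
  classical
  unfold Jf
  rw [Set.indicator_apply]
  split
  · calc |t + revSumZ G n x| ≤ |t| + |revSumZ G n x| := abs_add_le _ _
      _ ≤ |t| + n * B := by linarith [abs_revSumZ_le hB n x]
  · rw [abs_zero]
    positivity

lemma Jf_mono (G : (ℤ → A) → ℝ) (n : ℕ) (x : ℤ → A) : Monotone fun t => Jf G t n x := by
  intro t t' htt'
  classical
  simp only [Jf, Set.indicator_apply]
  by_cases h1 : x ∈ {x' : ℤ → A | survZ G t n x'}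
  · have h2 : x ∈ {x' : ℤ → A | survZ G t' n x'} := by
      intro k hk1 hk2
      have := h1 k hk1 hk2
      linarith
    rw [if_pos h1, if_pos h2]
    linarith
  · rw [if_neg h1]
    by_cases h2 : x ∈ {x' : ℤ → A | survZ G t' n x'}
    · rw [if_pos h2]
      rcases Nat.eq_zero_or_pos n with hn | hn
      · exfalso
        exact h1 (by subst hn; intro k hk1 hk2; omega)
      · exact h2 n hn le_rfl
    · rw [if_neg h2]

lemma integral_decomp {M : A → A → Bool} {ψ : (ℕ → A) → ℝ} {νm : (ℕ → A) → Measure (ℕ → A)}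
    (hνm : IsCondGibbs M ψ νm)
    (hnorm : ∀ z ∈ XplusSet M, transfer M ψ (fun _ => (1 : ℝ)) z = 1)
    {z : ℕ → A} (hz : z ∈ XplusSet M)
    (h : (ℕ → A) → ℝ) (hh : Measurable h) {B' : ℝ} (hB' : ∀ y, |h y| ≤ B') :
    ∫ y, h y ∂νm z = ∑ a ∈ Finset.univ.filter (fun a => M a (z 0) = true),
      Real.exp (-ψ (consN a z)) * ∫ y, h (consN a y) ∂νm (consN a z) := by
  rw [measure_decomp hνm hnorm hz]
  rw [integral_finset_sum_measure ?hint]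
  case hint =>
    intro a ha
    haveI : IsFiniteMeasure ((ENNReal.ofReal (Real.exp (-ψ (consN a z)))) •
        Measure.map (consN a) (νm (consN a z))) := by
      constructor
      rw [Measure.smul_apply, Measure.map_apply (measurable_consN a) MeasurableSet.univ]
      simp only [Set.preimage_univ]
      rw [nu_univ hνm (cons_mem_XplusSet (by simpa using ha) hz), smul_eq_mul, mul_one]
      exact ENNReal.ofReal_lt_top
    exact Integrable.mono' (integrable_const B') hh.aestronglyMeasurable
      (Filter.Eventually.of_forall fun y => by simpa [Real.norm_eq_abs] using hB' y)
  refine Finset.sum_congr rfl fun a ha => ?_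
  rw [integral_smul_measure, integral_map (measurable_consN a).aemeasurable
    hh.aestronglyMeasurable, ENNReal.toReal_ofReal (Real.exp_pos _).le, smul_eq_mul]

end Jsec

end Stmt18

end Aux18
/-- Compatibility of the harmonic function with shifting the observable by `T⁻¹`:
`V̌^{g∘T⁻¹}(z,t) = L_ψ(V̌^g(·,t))(z)`. -/
theorem statement18 [Fintype A] [DecidableEq A] [MeasurableSpace A] [MeasurableSingletonClass A]
    [TopologicalSpace A] [DiscreteTopology A]
    (M : A → A → Bool) (ψ : (ℕ → A) → ℝ) (hψ : ∃ C αh : ℝ, 0 < C ∧ 0 < αh ∧ αh < 1 ∧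
      HolderWithN (XplusSet M) C αh ψ)
    (hnorm : ∀ z ∈ XplusSet M, transfer M ψ (fun _ => (1 : ℝ)) z = 1)
    (νm : (ℕ → A) → Measure (ℕ → A)) (hνm : IsCondGibbs M ψ νm)
    (ν : Measure (ℤ → A)) [IsProbabilityMeasure ν]
    (hinv : MeasurePreserving shiftZ ν ν) (hsupp : ν (XSet M) = 1)
    (g : (ℤ → A) → ℝ) (hg : IsHolderZ (XSet M) g) (hg0 : ∫ x, g x ∂ν = 0)
    (hcob : ¬ IsCoboundaryZ (XSet M) g)
    (V V' : (ℕ → A) → ℝ → ℝ)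
    (hV : IsHarmonicLimit M νm g V)
    (hV' : IsHarmonicLimit M νm (fun x => g (shiftZinv x)) V') :
    ∀ z ∈ XplusSet M, ∀ t : ℝ,
      V' z t = ∑ a ∈ Finset.univ.filter (fun a => M a (z 0) = true),
        Real.exp (-ψ (consN a z)) * V (consN a z) t := by

  classical
  have hXne : (XSet M).Nonempty := by
    rcases Set.eq_empty_or_nonempty (XSet M) with h | h
    · rw [h, measure_empty] at hsupp
      exact absurd hsupp.symm one_ne_zero
    · exact h
  obtain ⟨G, B, hB0, hGmeas, hGg, hGB⟩ := Stmt18.exists_measurable_version M hg hXne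
  intro z hz t0
  set F := Finset.univ.filter (fun a => M a (z 0) = true) with hF
  have hzA : ∀ a ∈ F, consN a z ∈ XplusSet M := fun a ha =>
    Stmt18.cons_mem_XplusSet (Finset.mem_filter.mp ha).2 hz
  have hfin : ∀ z' ∈ XplusSet M, IsFiniteMeasure (νm z') := fun z' hz' =>
    ⟨by rw [Stmt18.nu_univ hνm hz']; exact ENNReal.one_lt_top⟩
  -- a.e. congruence: replacing `g` by its measurable bounded version `G`
  have hcong : ∀ (z' : ℕ → A), z' ∈ XplusSet M → ∀ (t : ℝ) (n : ℕ),
      (∫ y, Set.indicator {y' | survZ g t n (concat y' z')}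
          (fun y' => t + revSumZ g n (concat y' z')) y ∂νm z')
      = ∫ y, Stmt18.Jf G t n (concat y z') ∂νm z' := by
    intro z' hz' t n
    refine integral_congr_ae ?_
    filter_upwards [Stmt18.ae_pastCompat hνm hz'] with y hy
    have hx : concat y z' ∈ XSet M := Stmt18.concat_mem_XSet hy hz'
    simp only [Stmt18.Jf, Set.indicator_apply, Set.mem_setOf_eq]
    by_cases hs : survZ G t n (concat y z')
    · rw [if_pos ((Stmt18.survZ_congr hGg hx t n).mp hs), if_pos hs,
        Stmt18.revSumZ_congr hGg hx n]
    · rw [if_neg (fun h => hs ((Stmt18.survZ_congr hGg hx t n).mpr h)), if_neg hs]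
  have hcong' : ∀ (t : ℝ) (n : ℕ),
      (∫ y, Set.indicator {y' | survZ (fun x => g (shiftZinv x)) t n (concat y' z)}
          (fun y' => t + revSumZ (fun x => g (shiftZinv x)) n (concat y' z)) y ∂νm z)
      = ∫ y, Stmt18.Jf G t n (shiftZinv (concat y z)) ∂νm z := by
    intro t n
    refine integral_congr_ae ?_
    filter_upwards [Stmt18.ae_pastCompat hνm hz] with y hy
    have hx : concat y z ∈ XSet M := Stmt18.concat_mem_XSet hy hz
    have hx' : shiftZinv (concat y z) ∈ XSet M := Stmt18.shiftZinv_mem_XSet hx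
    simp only [Stmt18.Jf, Set.indicator_apply, Set.mem_setOf_eq]
    by_cases hs : survZ G t n (shiftZinv (concat y z))
    · rw [if_pos (by
          rw [Stmt18.survZ_comp_shiftZinv]
          exact (Stmt18.survZ_congr hGg hx' t n).mp hs), if_pos hs,
        Stmt18.revSumZ_comp_shiftZinv, Stmt18.revSumZ_congr hGg hx' n]
    · rw [if_neg (fun h => hs ((Stmt18.survZ_congr hGg hx' t n).mpr
          ((Stmt18.survZ_comp_shiftZinv g t n _).mp h))), if_neg hs]
  -- decomposition of the inner integral
  have hinner : ∀ (t : ℝ) (n : ℕ),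
      (∫ y, Stmt18.Jf G t n (shiftZinv (concat y z)) ∂νm z)
      = ∑ a ∈ F, Real.exp (-ψ (consN a z)) *
          ∫ y, Stmt18.Jf G t n (concat y (consN a z)) ∂νm (consN a z) := by
    intro t n
    have hmeas : Measurable (fun y : ℕ → A => Stmt18.Jf G t n (shiftZinv (concat y z))) :=
      (Stmt18.measurable_Jf hGmeas t n).comp
        (Stmt18.measurable_shiftZinv.comp (Stmt18.measurable_concat z))
    have hbd : ∀ y : ℕ → A, |Stmt18.Jf G t n (shiftZinv (concat y z))| ≤ |t| + n * B :=
      fun y => Stmt18.abs_Jf_le hB0 hGB t n _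
    rw [Stmt18.integral_decomp hνm hnorm hz _ hmeas hbd]
    refine Finset.sum_congr rfl fun a ha => ?_
    congr 1
    refine integral_congr_ae (Filter.Eventually.of_forall fun y => ?_)
    simp only [Stmt18.shiftZinv_concat, Stmt18.shiftN_consN, Stmt18.consN_zero]
  -- integrability and monotonicity of the approximants
  have hIaInt : ∀ a ∈ F, ∀ (t : ℝ) (n : ℕ),
      Integrable (fun y => Stmt18.Jf G t n (concat y (consN a z))) (νm (consN a z)) := by
    intro a ha t n
    haveI := hfin _ (hzA a ha)
    refine Integrable.mono' (integrable_const (|t| + n * B))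
      (((Stmt18.measurable_Jf hGmeas t n).comp
        (Stmt18.measurable_concat (consN a z)))).aestronglyMeasurable
      (Filter.Eventually.of_forall fun y => ?_)
    simpa [Real.norm_eq_abs] using Stmt18.abs_Jf_le hB0 hGB t n (concat y (consN a z))
  have hIaMono : ∀ a ∈ F, ∀ n : ℕ,
      Monotone (fun t => ∫ y, Stmt18.Jf G t n (concat y (consN a z)) ∂νm (consN a z)) := by
    intro a ha n t t' htt'
    exact integral_mono (hIaInt a ha t n) (hIaInt a ha t' n)
      (fun y => Stmt18.Jf_mono G n _ htt')
  -- the limit candidate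
  have hWmono : Monotone (fun s => ∑ a ∈ F, Real.exp (-ψ (consN a z)) * V (consN a z) s) := by
    intro s s' hss'
    exact Finset.sum_le_sum fun a ha =>
      mul_le_mul_of_nonneg_left ((hV _ (hzA a ha)).1.1 hss') (Real.exp_pos _).le
  have hWcwa : ∀ s : ℝ, ContinuousWithinAt
      (fun s => ∑ a ∈ F, Real.exp (-ψ (consN a z)) * V (consN a z) s) (Set.Ici s) s := by
    intro s
    exact tendsto_finset_sum _ fun a ha =>
      Filter.Tendsto.const_mul _ ((hV _ (hzA a ha)).1.2 s)
  -- weak identity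
  have hweak : ∀ φ : ℝ → ℝ, Continuous φ → HasCompactSupport φ →
      (∫ s, φ s * V' z s) =
        ∫ s, φ s * ∑ a ∈ F, Real.exp (-ψ (consN a z)) * V (consN a z) s := by
    intro φ hφ hφc
    have hIntφIa : ∀ a ∈ F, ∀ n : ℕ, Integrable (fun s : ℝ =>
        φ s * ∫ y, Stmt18.Jf G s n (concat y (consN a z)) ∂νm (consN a z)) := by
      intro a ha n
      have := ((hIaMono a ha n).locallyIntegrable (μ := volume)).integrable_smul_left_of_hasCompactSupport hφ hφc
      simpa [smul_eq_mul] using this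
    have hIntφV : ∀ a ∈ F, Integrable (fun s : ℝ => φ s * V (consN a z) s) := by
      intro a ha
      have := (((hV _ (hzA a ha)).1.1).locallyIntegrable (μ := volume)).integrable_smul_left_of_hasCompactSupport hφ hφc
      simpa [smul_eq_mul] using this
    have h1 := (hV' z hz).2 φ hφ hφc
    have h1' : Filter.Tendsto (fun n => ∑ a ∈ F, Real.exp (-ψ (consN a z)) *
        ∫ s, φ s * ∫ y, Stmt18.Jf G s n (concat y (consN a z)) ∂νm (consN a z))
        Filter.atTop (nhds (∫ s, φ s * V' z s)) := by
      refine h1.congr fun n => ?_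
      have heq : ∀ s : ℝ, (∫ y, Set.indicator {y' | survZ (fun x => g (shiftZinv x)) s n (concat y' z)}
          (fun y' => s + revSumZ (fun x => g (shiftZinv x)) n (concat y' z)) y ∂νm z)
          = ∑ a ∈ F, Real.exp (-ψ (consN a z)) *
            ∫ y, Stmt18.Jf G s n (concat y (consN a z)) ∂νm (consN a z) := by
        intro s
        rw [hcong' s n, hinner s n]
      calc (∫ s, φ s * ∫ y, Set.indicator {y' | survZ (fun x => g (shiftZinv x)) s n (concat y' z)}
              (fun y' => s + revSumZ (fun x => g (shiftZinv x)) n (concat y' z)) y ∂νm z)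
          = ∫ s, ∑ a ∈ F, Real.exp (-ψ (consN a z)) *
              (φ s * ∫ y, Stmt18.Jf G s n (concat y (consN a z)) ∂νm (consN a z)) := by
            refine integral_congr_ae (Filter.Eventually.of_forall fun s => ?_)
            simp only []
            rw [heq s, Finset.mul_sum]
            exact Finset.sum_congr rfl fun a _ => by ring
        _ = ∑ a ∈ F, Real.exp (-ψ (consN a z)) *
              ∫ s, φ s * ∫ y, Stmt18.Jf G s n (concat y (consN a z)) ∂νm (consN a z) := by
            rw [integral_finset_sum F fun a ha => (hIntφIa a ha n).const_mul _]
            exact Finset.sum_congr rfl fun a ha => integral_const_mul _ _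
    have h2 : ∀ a ∈ F, Filter.Tendsto (fun n => ∫ s, φ s *
        ∫ y, Stmt18.Jf G s n (concat y (consN a z)) ∂νm (consN a z))
        Filter.atTop (nhds (∫ s, φ s * V (consN a z) s)) := by
      intro a ha
      refine ((hV (consN a z) (hzA a ha)).2 φ hφ hφc).congr fun n => ?_
      congr 1
      funext s
      rw [hcong (consN a z) (hzA a ha) s n]
    have h3 := tendsto_finset_sum F fun a ha => (h2 a ha).const_mul (Real.exp (-ψ (consN a z)))
    have h4 : (∫ s, φ s * ∑ a ∈ F, Real.exp (-ψ (consN a z)) * V (consN a z) s)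
        = ∑ a ∈ F, Real.exp (-ψ (consN a z)) * ∫ s, φ s * V (consN a z) s := by
      calc (∫ s, φ s * ∑ a ∈ F, Real.exp (-ψ (consN a z)) * V (consN a z) s)
          = ∫ s, ∑ a ∈ F, Real.exp (-ψ (consN a z)) * (φ s * V (consN a z) s) := by
            refine integral_congr_ae (Filter.Eventually.of_forall fun s => ?_)
            simp only []
            rw [Finset.mul_sum]
            exact Finset.sum_congr rfl fun a _ => by ring
        _ = ∑ a ∈ F, Real.exp (-ψ (consN a z)) * ∫ s, φ s * V (consN a z) s := by
            rw [integral_finset_sum F fun a ha => (hIntφV a ha).const_mul _]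
            exact Finset.sum_congr rfl fun a ha => integral_const_mul _ _
    rw [h4]
    exact tendsto_nhds_unique h1' h3
  -- from weak identity to a.e. identity
  have hae : ∀ᵐ s : ℝ, V' z s = ∑ a ∈ F, Real.exp (-ψ (consN a z)) * V (consN a z) s := by
    refine ae_eq_of_integral_contDiff_smul_eq ((hV' z hz).1.1).locallyIntegrable
      hWmono.locallyIntegrable fun φ hφ hφc => ?_
    have := hweak φ hφ.continuous hφc
    simpa [smul_eq_mul] using this
  -- from a.e. identity to pointwise identity, using one-sided continuity
  have hpos : ∀ n : ℕ, ∃ s : ℝ,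
      (V' z s = ∑ a ∈ F, Real.exp (-ψ (consN a z)) * V (consN a z) s) ∧
        t0 < s ∧ s < t0 + 1 / (n + 1) := by
    intro n
    by_contra hcon
    push_neg at hcon
    have hsub : Set.Ioo t0 (t0 + 1 / (n + 1 : ℝ)) ⊆
        {s : ℝ | ¬ (V' z s = ∑ a ∈ F, Real.exp (-ψ (consN a z)) * V (consN a z) s)} := by
      intro s hs heq
      exact absurd hs.2 (not_lt.mpr (hcon s heq hs.1))
    have h0 : volume (Set.Ioo t0 (t0 + 1 / (n + 1 : ℝ))) = 0 :=
      measure_mono_null hsub (by rw [MeasureTheory.ae_iff] at hae; exact hae)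
    rw [Real.volume_Ioo] at h0
    have hpos' : (0 : ℝ) < 1 / (n + 1 : ℝ) := by positivity
    rw [ENNReal.ofReal_eq_zero] at h0
    linarith
  choose s hs1 hs2 hs3 using hpos
  have hub : Filter.Tendsto (fun n : ℕ => t0 + 1 / (n + 1 : ℝ)) Filter.atTop (nhds t0) := by
    have h := tendsto_one_div_add_atTop_nhds_zero_nat (𝕜 := ℝ)
    simpa using tendsto_const_nhds.add h
  have hstend : Filter.Tendsto s Filter.atTop (nhdsWithin t0 (Set.Ici t0)) := by
    apply tendsto_nhdsWithin_of_tendsto_nhds_of_eventually_within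
    · exact tendsto_of_tendsto_of_tendsto_of_le_of_le tendsto_const_nhds hub
        (fun n => (hs2 n).le) (fun n => (hs3 n).le)
    · exact Filter.Eventually.of_forall fun n => (hs2 n).le
  have hVt : Filter.Tendsto (fun n => V' z (s n)) Filter.atTop (nhds (V' z t0)) :=
    Filter.Tendsto.comp ((hV' z hz).1.2 t0) hstend
  have hWt : Filter.Tendsto (fun n => ∑ a ∈ F, Real.exp (-ψ (consN a z)) * V (consN a z) (s n))
      Filter.atTop (nhds (∑ a ∈ F, Real.exp (-ψ (consN a z)) * V (consN a z) t0)) := by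
    have h : Filter.Tendsto (fun u => ∑ a ∈ F, Real.exp (-ψ (consN a z)) * V (consN a z) u)
        (nhdsWithin t0 (Set.Ici t0))
        (nhds (∑ a ∈ F, Real.exp (-ψ (consN a z)) * V (consN a z) t0)) := hWcwa t0
    exact h.comp hstend
  have := tendsto_nhds_unique (hVt.congr fun n => hs1 n) hWt
  exact this
end
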